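/- arXiv:2005.03180 — 4 statements merged into one kernel-verified Lean document; each statement's English description precedes it below -/
import Mathlib

section
/- Let H be a separable real Hilbert space and ν a probability measure with E‖u‖⁴ < ∞. Let V_{d,N} be the PCA subspace spanned by the top d empirical eigenvectors from N ≥ d i.i.d. samples, and V_d the span of the top d eigenvectors of the true covariance C. Then there is a constant Q ≥ 0 depending only on ν such that E_{samples}[R(V_{d,N})] ≤ √(Qd/N) + R(V_d), where R(V) = E_{u∼ν}‖u − Π_V u‖². -/
open MeasureTheory
open scoped RealInnerProductSpace BigOperators

open ProbabilityTheory
open scoped ENNReal NNReal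


lemma pca_aux_trace_bound {H : Type*} [NormedAddCommGroup H] [InnerProductSpace ℝ H]
    [CompleteSpace H]
    (b : HilbertBasis ℕ ℝ H) (T : H →L[ℝ] H)
    (hsym : ∀ x y : H, ⟪T x, y⟫ = ⟪x, T y⟫)
    (hsum : Summable (fun i => ‖T (b i)‖ ^ 2))
    {d : ℕ} (χ : Fin d → H) (hχ : Orthonormal ℝ χ) :
    ∑ j, ⟪T (χ j), χ j⟫ ≤ Real.sqrt d * Real.sqrt (∑' i, ‖T (b i)‖ ^ 2) := by
  have key : ∑ j, ‖T (χ j)‖ ^ 2 ≤ ∑' i, ‖T (b i)‖ ^ 2 := by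
    have hpar : ∀ j, ‖T (χ j)‖ ^ 2 = ∑' i, ⟪T (b i), χ j⟫ ^ 2 := by
      intro j
      rw [← real_inner_self_eq_norm_sq]
      rw [← b.tsum_inner_mul_inner (T (χ j)) (T (χ j))]
      congr 1; ext i
      rw [hsym (χ j) (b i), ← hsym (b i) (χ j), real_inner_comm (χ j) (T (b i))]
      ring
    have hsummable : ∀ j : Fin d, Summable (fun i => ⟪T (b i), χ j⟫ ^ 2) := by
      intro j
      have := b.summable_inner_mul_inner (T (χ j)) (T (χ j))
      refine this.congr fun i => ?_
      rw [hsym (χ j) (b i), ← hsym (b i) (χ j), real_inner_comm (χ j) (T (b i))]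
      ring
    calc ∑ j, ‖T (χ j)‖ ^ 2 = ∑ j, ∑' i, ⟪T (b i), χ j⟫ ^ 2 := by
          exact Finset.sum_congr rfl fun j _ => hpar j
      _ = ∑' i, ∑ j, ⟪T (b i), χ j⟫ ^ 2 := (Summable.tsum_finsetSum (fun j _ => hsummable j)).symm
      _ ≤ ∑' i, ‖T (b i)‖ ^ 2 := by
          refine Summable.tsum_le_tsum (fun i => ?_) ?_ hsum
          · have := hχ.sum_inner_products_le (T (b i)) (s := Finset.univ)
            calc ∑ j, ⟪T (b i), χ j⟫ ^ 2 = ∑ j, ‖⟪χ j, T (b i)⟫‖ ^ 2 := by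
                  refine Finset.sum_congr rfl fun j _ => ?_
                  rw [Real.norm_eq_abs, sq_abs, real_inner_comm]
              _ ≤ ‖T (b i)‖ ^ 2 := this
          · refine Summable.of_nonneg_of_le (fun i => ?_) (fun i => ?_) hsum
            · positivity
            · have := hχ.sum_inner_products_le (T (b i)) (s := Finset.univ)
              calc ∑ j, ⟪T (b i), χ j⟫ ^ 2 = ∑ j, ‖⟪χ j, T (b i)⟫‖ ^ 2 := by
                    refine Finset.sum_congr rfl fun j _ => ?_
                    rw [Real.norm_eq_abs, sq_abs, real_inner_comm]
                _ ≤ ‖T (b i)‖ ^ 2 := this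
  have h1 : ∑ j, ⟪T (χ j), χ j⟫ ≤ ∑ j, ‖T (χ j)‖ := by
    refine Finset.sum_le_sum fun j _ => ?_
    calc ⟪T (χ j), χ j⟫ ≤ ‖T (χ j)‖ * ‖χ j‖ := real_inner_le_norm _ _
      _ = ‖T (χ j)‖ := by rw [hχ.1 j, mul_one]
  have h2 : (∑ j, ‖T (χ j)‖) ^ 2 ≤ (d : ℝ) * ∑ j, ‖T (χ j)‖ ^ 2 := by
    have := Finset.sum_mul_sq_le_sq_mul_sq Finset.univ (fun _ : Fin d => (1:ℝ))
      (fun j => ‖T (χ j)‖)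
    simpa [Finset.card_univ] using this
  have h3 : ∑ j, ‖T (χ j)‖ ≤ Real.sqrt ((d : ℝ) * ∑ j, ‖T (χ j)‖ ^ 2) := by
    rw [← Real.sqrt_sq (by positivity : (0:ℝ) ≤ ∑ j, ‖T (χ j)‖)]
    exact Real.sqrt_le_sqrt h2
  calc ∑ j, ⟪T (χ j), χ j⟫ ≤ ∑ j, ‖T (χ j)‖ := h1
    _ ≤ Real.sqrt ((d : ℝ) * ∑ j, ‖T (χ j)‖ ^ 2) := h3
    _ ≤ Real.sqrt ((d : ℝ) * ∑' i, ‖T (b i)‖ ^ 2) := by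
        refine Real.sqrt_le_sqrt (mul_le_mul_of_nonneg_left key (by positivity))
    _ = Real.sqrt d * Real.sqrt (∑' i, ‖T (b i)‖ ^ 2) := Real.sqrt_mul (by positivity) _

lemma pca_aux_proj_error {H : Type*} [NormedAddCommGroup H] [InnerProductSpace ℝ H]
    [CompleteSpace H] [TopologicalSpace.SeparableSpace H] [MeasurableSpace H] [BorelSpace H]
    (ν : Measure H) [IsProbabilityMeasure ν]
    (hint2 : Integrable (fun v : H => ‖v‖ ^ 2) ν)
    (C : H →L[ℝ] H)
    (hC : ∀ v z : H, ⟪v, C z⟫ = ∫ u, ⟪v, u⟫ * ⟪z, u⟫ ∂ν)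
    {d : ℕ} (χ : Fin d → H) (hχ : Orthonormal ℝ χ) :
    ∫ v, ‖v - ∑ j, ⟪χ j, v⟫ • χ j‖ ^ 2 ∂ν
      = (∫ v, ‖v‖ ^ 2 ∂ν) - ∑ j, ⟪χ j, C (χ j)⟫ := by
  haveI : SecondCountableTopology H := UniformSpace.secondCountable_of_separable H
  have hpt : ∀ v : H, ‖v - ∑ j, ⟪χ j, v⟫ • χ j‖ ^ 2 = ‖v‖ ^ 2 - ∑ j, ⟪χ j, v⟫ ^ 2 := by
    intro v
    have h := hχ.sum_inner_products_le v (s := Finset.univ)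
    -- reprove the bessel identity
    have hy : ‖(∑ j, ⟪χ j, v⟫ • χ j : H)‖ ^ 2 = ∑ j, ⟪χ j, v⟫ ^ 2 := by
      rw [← real_inner_self_eq_norm_sq, inner_sum]
      refine Finset.sum_congr rfl fun j _ => ?_
      rw [real_inner_smul_right, sum_inner]
      rw [Finset.sum_eq_single j]
      · rw [real_inner_smul_left, real_inner_self_eq_norm_sq, hχ.1 j]
        ring
      · intro i _ hij
        rw [real_inner_smul_left, hχ.2 hij, mul_zero]
      · simp
    have hxy : ⟪v, (∑ j, ⟪χ j, v⟫ • χ j : H)⟫ = ∑ j, ⟪χ j, v⟫ ^ 2 := by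
      rw [inner_sum]
      refine Finset.sum_congr rfl fun j _ => ?_
      rw [real_inner_smul_right, real_inner_comm v (χ j)]
      ring
    rw [@norm_sub_sq ℝ, hy, hxy]
    simp only [RCLike.re_to_real]
    ring
  have hmeasj : ∀ j : Fin d, Integrable (fun v : H => ⟪χ j, v⟫ ^ 2) ν := by
    intro j
    refine Integrable.mono hint2 ?_ ?_
    · exact ((continuous_const.inner continuous_id).pow 2).aestronglyMeasurable
    · refine Filter.Eventually.of_forall fun v => ?_
      rw [Real.norm_eq_abs, Real.norm_eq_abs, abs_of_nonneg (sq_nonneg _),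
        abs_of_nonneg (by positivity : (0:ℝ) ≤ ‖v‖ ^ 2)]
      calc ⟪χ j, v⟫ ^ 2 ≤ (‖χ j‖ * ‖v‖) ^ 2 := by
            rw [← sq_abs]
            exact pow_le_pow_left₀ (abs_nonneg _) (abs_real_inner_le_norm _ _) 2
        _ = ‖v‖ ^ 2 := by rw [hχ.1 j]; ring
  have hCj : ∀ j : Fin d, ∫ v, ⟪χ j, v⟫ ^ 2 ∂ν = ⟪χ j, C (χ j)⟫ := by
    intro j
    rw [hC (χ j) (χ j)]
    congr 1; ext v; ring
  calc ∫ v, ‖v - ∑ j, ⟪χ j, v⟫ • χ j‖ ^ 2 ∂ν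
      = ∫ v, (‖v‖ ^ 2 - ∑ j, ⟪χ j, v⟫ ^ 2) ∂ν := by
        congr 1; ext v; exact hpt v
    _ = (∫ v, ‖v‖ ^ 2 ∂ν) - ∫ v, ∑ j, ⟪χ j, v⟫ ^ 2 ∂ν :=
        integral_sub hint2 (integrable_finset_sum _ fun j _ => hmeasj j)
    _ = (∫ v, ‖v‖ ^ 2 ∂ν) - ∑ j, ⟪χ j, C (χ j)⟫ := by
        rw [integral_finset_sum _ fun j _ => hmeasj j]
        congr 1
        exact Finset.sum_congr rfl fun j _ => hCj j

lemma pca_aux_variance {H : Type*} [MeasurableSpace H]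
    (ν : Measure H) [IsProbabilityMeasure ν]
    {Ω : Type} [MeasurableSpace Ω] (P : Measure Ω) [IsProbabilityMeasure P]
    {N : ℕ} (hN : 0 < N) (u : Fin N → Ω → H) (hu : ∀ j, Measurable (u j))
    (hindep : ProbabilityTheory.iIndepFun u P)
    (hmap : ∀ j, P.map (u j) = ν)
    (g : H → ℝ) (hg : Measurable g)
    (hg1 : Integrable g ν) (hg2 : Integrable (fun v => g v ^ 2) ν) :
    Integrable (fun ω => ((∫ v, g v ∂ν) - (N:ℝ)⁻¹ * ∑ k, g (u k ω)) ^ 2) P ∧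
    ∫ ω, ((∫ v, g v ∂ν) - (N:ℝ)⁻¹ * ∑ k, g (u k ω)) ^ 2 ∂P
      ≤ (∫ v, g v ^ 2 ∂ν) / N := by
  set c : ℝ := ∫ v, g v ∂ν with hc
  set m : ℝ := ∫ v, g v ^ 2 ∂ν with hm
  set Y : Fin N → Ω → ℝ := fun k => (fun x => g x - c) ∘ (u k) with hYdef
  have hgmeas : ∀ k : Fin N, AEStronglyMeasurable g (P.map (u k)) := by
    intro k; rw [hmap k]; exact hg1.1
  have hgm : ∀ k : Fin N, Integrable (fun ω => g (u k ω)) P := by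
    intro k
    have h1 : Integrable g (P.map (u k)) := by rw [hmap k]; exact hg1
    exact (integrable_map_measure (hgmeas k) (hu k).aemeasurable).mp h1
  have hg2meas : ∀ k : Fin N, AEStronglyMeasurable (fun v => g v ^ 2) (P.map (u k)) := by
    intro k; rw [hmap k]; exact hg2.1
  have hgm2 : ∀ k : Fin N, Integrable (fun ω => g (u k ω) ^ 2) P := by
    intro k
    have h1 : Integrable (fun v => g v ^ 2) (P.map (u k)) := by rw [hmap k]; exact hg2
    exact (integrable_map_measure (hg2meas k) (hu k).aemeasurable).mp h1
  have hEX : ∀ k : Fin N, ∫ ω, g (u k ω) ∂P = c := by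
    intro k
    rw [hc, ← hmap k]
    exact (integral_map (hu k).aemeasurable (hgmeas k)).symm
  have hEX2 : ∀ k : Fin N, ∫ ω, g (u k ω) ^ 2 ∂P = m := by
    intro k
    rw [hm, ← hmap k]
    exact (integral_map (hu k).aemeasurable (hg2meas k)).symm
  have hYint : ∀ k : Fin N, Integrable (Y k) P := fun k => (hgm k).sub (integrable_const c)
  have hEY : ∀ k : Fin N, ∫ ω, Y k ω ∂P = 0 := by
    intro k
    have : ∫ ω, Y k ω ∂P = (∫ ω, g (u k ω) ∂P) - ∫ _, c ∂P :=
      integral_sub (hgm k) (integrable_const c)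
    rw [this, hEX k, integral_const]
    simp
  have hY2eq : ∀ k : Fin N, (fun ω => Y k ω * Y k ω)
      = fun ω => g (u k ω) ^ 2 - (2*c) * g (u k ω) + c ^ 2 := by
    intro k; funext ω; simp only [hYdef, Function.comp_apply]; ring
  have hY2int : ∀ k : Fin N, Integrable (fun ω => Y k ω * Y k ω) P := by
    intro k
    rw [hY2eq k]
    exact ((hgm2 k).sub ((hgm k).const_mul (2*c))).add (integrable_const _)
  have hEY2 : ∀ k : Fin N, ∫ ω, Y k ω * Y k ω ∂P ≤ m := by
    intro k
    have h1 : Integrable (fun ω => g (u k ω) ^ 2 - 2 * c * g (u k ω)) P :=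
      (hgm2 k).sub ((hgm k).const_mul (2*c))
    have h2 : ∫ ω, (g (u k ω) ^ 2 - 2 * c * g (u k ω) + c ^ 2) ∂P
        = (∫ ω, (g (u k ω) ^ 2 - 2 * c * g (u k ω)) ∂P) + ∫ _, c ^ 2 ∂P := by
      exact integral_add h1 (integrable_const _)
    have h3 : ∫ ω, (g (u k ω) ^ 2 - 2 * c * g (u k ω)) ∂P
        = (∫ ω, g (u k ω) ^ 2 ∂P) - ∫ ω, 2 * c * g (u k ω) ∂P := by
      exact integral_sub (hgm2 k) ((hgm k).const_mul (2*c))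
    rw [hY2eq k, h2, h3, hEX2 k, integral_const_mul, hEX k, integral_const]
    simp only [measure_univ, probReal_univ, ENNReal.toReal_one, smul_eq_mul, one_mul]
    nlinarith [sq_nonneg c]
  have hindY : ∀ k l : Fin N, k ≠ l → IndepFun (Y k) (Y l) P := by
    intro k l hkl
    exact (hindep.indepFun hkl).comp (hg.sub measurable_const) (hg.sub measurable_const)
  have hYprodint : ∀ k l : Fin N, Integrable (fun ω => Y k ω * Y l ω) P := by
    intro k l
    by_cases hkl : k = l
    · subst hkl; exact hY2int k
    · exact (hindY k l hkl).integrable_mul (hYint k) (hYint l)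
  have hEYprod : ∀ k l : Fin N, k ≠ l → ∫ ω, Y k ω * Y l ω ∂P = 0 := by
    intro k l hkl
    have := (hindY k l hkl).integral_mul_eq_mul_integral (hYint k).1 (hYint l).1
    have h2 : ∫ ω, Y k ω * Y l ω ∂P = ∫ ω, (Y k * Y l) ω ∂P := rfl
    rw [h2, this, hEY k, zero_mul]
  -- rewrite the integrand
  have hrw : (fun ω => (c - (N:ℝ)⁻¹ * ∑ k, g (u k ω)) ^ 2)
      = fun ω => ((N:ℝ)⁻¹) ^ 2 * ∑ k, ∑ l, Y k ω * Y l ω := by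
    funext ω
    rw [← Finset.sum_mul_sum]
    have hsY : ∑ k, Y k ω = (∑ k, g (u k ω)) - N * c := by
      simp only [hYdef, Function.comp_apply, Finset.sum_sub_distrib, Finset.sum_const,
        Finset.card_univ, Fintype.card_fin, nsmul_eq_mul]
    rw [hsY]
    have hNne : (N:ℝ) ≠ 0 := Nat.cast_ne_zero.mpr hN.ne'
    field_simp
    ring
  have hintsum : Integrable (fun ω => ∑ k : Fin N, ∑ l : Fin N, Y k ω * Y l ω) P :=
    integrable_finset_sum _ fun k _ => integrable_finset_sum _ fun l _ => hYprodint k l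
  constructor
  · rw [hrw]; exact hintsum.const_mul _
  · rw [hrw]
    rw [integral_const_mul]
    have hsum : ∫ ω, ∑ k : Fin N, ∑ l : Fin N, Y k ω * Y l ω ∂P
        = ∑ k : Fin N, ∑ l : Fin N, ∫ ω, Y k ω * Y l ω ∂P := by
      rw [integral_finset_sum _ fun k _ => integrable_finset_sum _ fun l _ => hYprodint k l]
      exact Finset.sum_congr rfl fun k _ =>
        integral_finset_sum _ fun l _ => hYprodint k l
    rw [hsum]
    have hdiag : ∀ k : Fin N, ∑ l : Fin N, ∫ ω, Y k ω * Y l ω ∂P ≤ m := by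
      intro k
      rw [Finset.sum_eq_single k]
      · exact hEY2 k
      · intro l _ hlk; exact hEYprod k l (Ne.symm hlk)
      · simp
    have hmnn : (0:ℝ) ≤ m := by
      rw [hm]; exact integral_nonneg fun v => sq_nonneg _
    calc ((N:ℝ)⁻¹) ^ 2 * ∑ k : Fin N, ∑ l : Fin N, ∫ ω, Y k ω * Y l ω ∂P
        ≤ ((N:ℝ)⁻¹) ^ 2 * ∑ k : Fin N, m := by
          refine mul_le_mul_of_nonneg_left ?_ (by positivity)
          exact Finset.sum_le_sum fun k _ => hdiag k
      _ = ((N:ℝ)⁻¹) ^ 2 * (N * m) := by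
          rw [Finset.sum_const, Finset.card_univ, Fintype.card_fin, nsmul_eq_mul]
      _ = m / N := by
          have hNpos : (0:ℝ) < N := Nat.cast_pos.mpr hN
          field_simp

/-- The rank-one operator `u ⊗ u : v ↦ ⟪u, v⟫ • u`. -/
noncomputable def rankOne {H : Type*} [NormedAddCommGroup H] [InnerProductSpace ℝ H]
    (u : H) : H →L[ℝ] H :=
  (innerSL ℝ u).smulRight u

/-- **PCA generalization bound**: let `ν` be a probability measure with finite
fourth moment on a separable real Hilbert space, with non-centered covariance `C`
having orthonormal eigenvectors `φ` (spanning a dense subspace) and decreasing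
eigenvalues.  There is a constant `Q ≥ 0`, depending only on `ν`, such that for
every `d`, every sample size `N ≥ d`, and every i.i.d. sample `u 1, ..., u N ∼ ν`
with empirical PCA subspace `V_{d,N}(ω)` spanned by top-`d` orthonormal
eigenvectors `ψ j ω` of the empirical covariance, the expected population
projection error of `V_{d,N}` satisfies
`E[R(V_{d,N})] ≤ √(Q d / N) + R(V_d)`,
where `V_d` is the span of the top `d` population eigenvectors. -/
theorem pca_generalization_bound
    {H : Type*} [NormedAddCommGroup H] [InnerProductSpace ℝ H] [CompleteSpace H]
    [TopologicalSpace.SeparableSpace H] [MeasurableSpace H] [BorelSpace H]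
    (ν : Measure H) [IsProbabilityMeasure ν]
    (hmom4 : Integrable (fun u : H => ‖u‖ ^ 4) ν)
    (C : H →L[ℝ] H)
    (hC : ∀ v z : H, ⟪v, C z⟫ = ∫ u, ⟪v, u⟫ * ⟪z, u⟫ ∂ν)
    (lam : ℕ → ℝ) (φ : ℕ → H) (hφ : Orthonormal ℝ φ)
    (heig : ∀ j, C (φ j) = lam j • φ j) (hdec : Antitone lam)
    (hspan : (Submodule.span ℝ (Set.range φ)).topologicalClosure = ⊤) :
    ∃ Q : ℝ, 0 ≤ Q ∧
      ∀ (d N : ℕ), 1 ≤ d → d ≤ N →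
      ∀ (Ω : Type) (_ : MeasurableSpace Ω) (P : Measure Ω), IsProbabilityMeasure P →
      ∀ (u : Fin N → Ω → H), (∀ j, Measurable (u j)) →
        ProbabilityTheory.iIndepFun u P →
        (∀ j, P.map (u j) = ν) →
      ∀ (ψ : Fin d → Ω → H) (mu : Fin d → Ω → ℝ),
        (∀ ω, Orthonormal ℝ (fun j => ψ j ω)) →
        (∀ ω j, ((N : ℝ)⁻¹ • ∑ k, rankOne (u k ω)) (ψ j ω) = mu j ω • ψ j ω) →
        (∀ ω (χ : Fin d → H), Orthonormal ℝ χ →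
          (∑ j, ⟪((N : ℝ)⁻¹ • ∑ k, rankOne (u k ω)) (χ j), χ j⟫)
            ≤ ∑ j, ⟪((N : ℝ)⁻¹ • ∑ k, rankOne (u k ω)) (ψ j ω), ψ j ω⟫) →
        (∫ ω, ∫ v, ‖v - ∑ j : Fin d, ⟪ψ j ω, v⟫ • ψ j ω‖ ^ 2 ∂ν ∂P)
          ≤ Real.sqrt (Q * d / N)
            + ∫ v, ‖v - ∑ j ∈ Finset.range d, ⟪φ j, v⟫ • φ j‖ ^ 2 ∂ν := by
  classical
  haveI : SecondCountableTopology H := UniformSpace.secondCountable_of_separable H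
  set M4 : ℝ := ∫ v, ‖v‖ ^ 4 ∂ν with hM4def
  have hM4nn : 0 ≤ M4 := integral_nonneg fun v => by positivity
  -- integrability of the second moment
  have hint2 : Integrable (fun v : H => ‖v‖ ^ 2) ν := by
    refine (hmom4.add (integrable_const 1)).mono
      ((continuous_norm.pow 2).aestronglyMeasurable) (.of_forall fun v => ?_)
    rw [Real.norm_eq_abs, abs_of_nonneg (by positivity), Real.norm_eq_abs]
    have h1 : ‖v‖ ^ 2 ≤ ‖v‖ ^ 4 + 1 := by nlinarith [sq_nonneg (‖v‖ ^ 2 - 1)]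
    calc ‖v‖ ^ 2 ≤ ‖v‖ ^ 4 + 1 := h1
      _ ≤ |‖v‖ ^ 4 + 1| := le_abs_self _
  set M2 : ℝ := ∫ v, ‖v‖ ^ 2 ∂ν with hM2def
  -- the Hilbert basis
  set b : HilbertBasis ℕ ℝ H := HilbertBasis.mk hφ hspan.ge with hbdef
  have hb : ⇑b = φ := HilbertBasis.coe_mk hφ hspan.ge
  have hbsq : ∀ x : H, Summable (fun i => ⟪φ i, x⟫ ^ 2) := by
    intro x
    have h := hφ.inner_products_summable (x := x)
    simpa [Real.norm_eq_abs, sq_abs] using h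
  have hpars : ∀ x : H, ∑' m, ⟪φ m, x⟫ ^ 2 = ‖x‖ ^ 2 := by
    intro x
    have h := b.tsum_inner_mul_inner x x
    rw [real_inner_self_eq_norm_sq] at h
    rw [← h]
    refine tsum_congr fun i => ?_
    rw [hb, real_inner_comm x (φ i)]
    ring
  -- integrability of squared inner products
  have hintinner : ∀ x : H, Integrable (fun v : H => ⟪x, v⟫ ^ 2) ν := by
    intro x
    refine (hint2.const_mul (‖x‖ ^ 2)).mono
      (((continuous_const.inner continuous_id).pow 2).aestronglyMeasurable)
      (.of_forall fun v => ?_)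
    rw [Real.norm_eq_abs, abs_of_nonneg (sq_nonneg _), Real.norm_eq_abs]
    have h1 := abs_real_inner_le_norm x v
    calc ⟪x, v⟫ ^ 2 = |⟪x, v⟫| ^ 2 := (sq_abs _).symm
      _ ≤ (‖x‖ * ‖v‖) ^ 2 := pow_le_pow_left₀ (abs_nonneg _) h1 2
      _ = ‖x‖ ^ 2 * ‖v‖ ^ 2 := by ring
      _ ≤ |‖x‖ ^ 2 * ‖v‖ ^ 2| := le_abs_self _
  -- facts about the eigenvalues
  have hlam_eq : ∀ j, lam j = ∫ v, ⟪φ j, v⟫ ^ 2 ∂ν := by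
    intro j
    have h1 : ⟪φ j, C (φ j)⟫ = lam j := by
      rw [heig j, real_inner_smul_right, real_inner_self_eq_norm_sq, hφ.1 j]
      ring
    rw [← h1, hC]
    refine integral_congr_ae (.of_forall fun v => ?_)
    ring
  have hlam_nn : ∀ j, 0 ≤ lam j := fun j =>
    (hlam_eq j) ▸ integral_nonneg fun v => sq_nonneg _
  have hlam_sum : Summable lam := by
    refine summable_of_sum_le (c := M2) (fun j => hlam_nn j) fun s => ?_
    have h1 : ∑ j ∈ s, lam j = ∫ v, ∑ j ∈ s, ⟪φ j, v⟫ ^ 2 ∂ν := by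
      rw [integral_finset_sum _ fun j _ => hintinner (φ j)]
      exact Finset.sum_congr rfl fun j _ => hlam_eq j
    rw [h1]
    refine integral_mono (integrable_finset_sum _ fun j _ => hintinner (φ j)) hint2 fun v => ?_
    have h2 := hφ.sum_inner_products_le v (s := s)
    simpa [Real.norm_eq_abs, sq_abs] using h2
  have hlam2_sum : Summable (fun j => lam j ^ 2) := by
    refine Summable.of_nonneg_of_le (fun j => sq_nonneg _) (fun j => ?_) (hlam_sum.mul_left (lam 0))
    have := hdec (Nat.zero_le j)
    nlinarith [hlam_nn j]
  refine ⟨4 * M4, by positivity, ?_⟩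
  intro d N hd hdN Ω mΩ P hP u hu hindep hmap ψ mu hψon heigψ hopt
  haveI := hP
  have hNpos : 0 < N := lt_of_lt_of_le hd hdN
  have hNR : (0:ℝ) < N := by exact_mod_cast hNpos
  -- the empirical covariance operator
  set Aop : Ω → H →L[ℝ] H := fun ω => (N : ℝ)⁻¹ • ∑ k, rankOne (u k ω) with hAdef
  have hAapp : ∀ ω z, Aop ω z = (N : ℝ)⁻¹ • ∑ k, ⟪u k ω, z⟫ • u k ω := by
    intro ω z
    simp [hAdef, rankOne, ContinuousLinearMap.sum_apply]
  have hAinner : ∀ ω x z, ⟪x, Aop ω z⟫ = (N : ℝ)⁻¹ * ∑ k, ⟪u k ω, z⟫ * ⟪x, u k ω⟫ := by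
    intro ω x z
    rw [hAapp, real_inner_smul_right, inner_sum]
    congr 1
    exact Finset.sum_congr rfl fun k _ => real_inner_smul_right _ _ _
  have hAsym : ∀ ω x z, ⟪Aop ω x, z⟫ = ⟪x, Aop ω z⟫ := by
    intro ω x z
    rw [← real_inner_comm (Aop ω x) z, hAinner, hAinner]
    congr 1
    refine Finset.sum_congr rfl fun k _ => ?_
    rw [real_inner_comm x (u k ω), real_inner_comm (u k ω) z]
    ring
  have hCsym : ∀ x z : H, ⟪C x, z⟫ = ⟪x, C z⟫ := by
    intro x z
    rw [← real_inner_comm (C x) z, hC, hC]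
    refine integral_congr_ae (.of_forall fun v => ?_)
    ring
  have hTsym : ∀ ω (x z : H), ⟪(C - Aop ω) x, z⟫ = ⟪x, (C - Aop ω) z⟫ := by
    intro ω x z
    simp only [ContinuousLinearMap.sub_apply, inner_sub_left, inner_sub_right]
    rw [hCsym, hAsym]
  -- summability of the Hilbert-Schmidt sums
  have hsumA : ∀ ω, Summable (fun i => ‖(C - Aop ω) (φ i)‖ ^ 2) := by
    intro ω
    have hmaj : ∀ i, ‖(C - Aop ω) (φ i)‖ ^ 2 ≤ 2 * lam i ^ 2 + 2 * ‖Aop ω (φ i)‖ ^ 2 := by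
      intro i
      have h1 : ‖(C - Aop ω) (φ i)‖ ≤ ‖C (φ i)‖ + ‖Aop ω (φ i)‖ := by
        simpa [ContinuousLinearMap.sub_apply] using norm_sub_le (C (φ i)) (Aop ω (φ i))
      have h2 : ‖C (φ i)‖ = |lam i| := by
        rw [heig i, norm_smul, hφ.1 i, Real.norm_eq_abs, mul_one]
      have h3 : ‖(C - Aop ω) (φ i)‖ ^ 2 ≤ (‖C (φ i)‖ + ‖Aop ω (φ i)‖) ^ 2 :=
        pow_le_pow_left₀ (norm_nonneg _) h1 2
      calc ‖(C - Aop ω) (φ i)‖ ^ 2 ≤ (‖C (φ i)‖ + ‖Aop ω (φ i)‖) ^ 2 := h3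
        _ ≤ 2 * ‖C (φ i)‖ ^ 2 + 2 * ‖Aop ω (φ i)‖ ^ 2 := by
            nlinarith [sq_nonneg (‖C (φ i)‖ - ‖Aop ω (φ i)‖)]
        _ = 2 * lam i ^ 2 + 2 * ‖Aop ω (φ i)‖ ^ 2 := by rw [h2, sq_abs]
    have hA2 : ∀ i, ‖Aop ω (φ i)‖ ^ 2
        ≤ (N:ℝ)⁻¹ ^ 2 * ((N:ℝ) * ∑ k, ⟪u k ω, φ i⟫ ^ 2 * ‖u k ω‖ ^ 2) := by
      intro i
      have h1 : ‖Aop ω (φ i)‖ ≤ (N:ℝ)⁻¹ * ∑ k, |⟪u k ω, φ i⟫| * ‖u k ω‖ := by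
        rw [hAapp, norm_smul, Real.norm_eq_abs,
          abs_of_nonneg (inv_nonneg.mpr (Nat.cast_nonneg N))]
        gcongr
        refine (norm_sum_le _ _).trans ?_
        refine le_of_eq (Finset.sum_congr rfl fun k _ => ?_)
        rw [norm_smul, Real.norm_eq_abs]
      have h2 : (∑ k, |⟪u k ω, φ i⟫| * ‖u k ω‖) ^ 2
          ≤ (N:ℝ) * ∑ k, ⟪u k ω, φ i⟫ ^ 2 * ‖u k ω‖ ^ 2 := by
        have h3 := Finset.sum_mul_sq_le_sq_mul_sq Finset.univ (fun _ : Fin N => (1:ℝ))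
          (fun k => |⟪u k ω, φ i⟫| * ‖u k ω‖)
        simp only [one_mul, one_pow, Finset.sum_const, Finset.card_univ, Fintype.card_fin,
          nsmul_eq_mul, mul_one] at h3
        calc (∑ k, |⟪u k ω, φ i⟫| * ‖u k ω‖) ^ 2
            ≤ (N:ℝ) * ∑ k, (|⟪u k ω, φ i⟫| * ‖u k ω‖) ^ 2 := h3
          _ = (N:ℝ) * ∑ k, ⟪u k ω, φ i⟫ ^ 2 * ‖u k ω‖ ^ 2 := by
              congr 1
              exact Finset.sum_congr rfl fun k _ => by rw [mul_pow, sq_abs]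
      calc ‖Aop ω (φ i)‖ ^ 2 ≤ ((N:ℝ)⁻¹ * ∑ k, |⟪u k ω, φ i⟫| * ‖u k ω‖) ^ 2 :=
            pow_le_pow_left₀ (norm_nonneg _) h1 2
        _ = (N:ℝ)⁻¹ ^ 2 * (∑ k, |⟪u k ω, φ i⟫| * ‖u k ω‖) ^ 2 := by ring
        _ ≤ (N:ℝ)⁻¹ ^ 2 * ((N:ℝ) * ∑ k, ⟪u k ω, φ i⟫ ^ 2 * ‖u k ω‖ ^ 2) := by
            gcongr
    have hsumg : Summable (fun i => 2 * lam i ^ 2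
        + 2 * ((N:ℝ)⁻¹ ^ 2 * ((N:ℝ) * ∑ k, ⟪u k ω, φ i⟫ ^ 2 * ‖u k ω‖ ^ 2))) := by
      refine (hlam2_sum.mul_left 2).add ?_
      refine Summable.mul_left 2 ?_
      refine Summable.mul_left _ ?_
      refine Summable.mul_left _ ?_
      refine summable_sum fun k _ => ?_
      have h4 : Summable (fun i => ⟪u k ω, φ i⟫ ^ 2) := by
        refine (hbsq (u k ω)).congr fun i => ?_
        rw [real_inner_comm]
      exact h4.mul_right _
    refine Summable.of_nonneg_of_le (fun i => by positivity) (fun i => ?_) hsumg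
    refine (hmaj i).trans ?_
    have := hA2 i
    nlinarith
  -- the Hilbert-Schmidt norm squared of the difference operator
  set F : Ω → ℝ := fun ω => ∑' i, ‖(C - Aop ω) (φ i)‖ ^ 2 with hFdef
  have hFnn : ∀ ω, 0 ≤ F ω := fun ω => tsum_nonneg fun i => sq_nonneg _
  -- trace bound specialised to our basis
  have htrace : ∀ (T : H →L[ℝ] H), (∀ x z : H, ⟪T x, z⟫ = ⟪x, T z⟫) →
      Summable (fun i => ‖T (φ i)‖ ^ 2) →
      ∀ (χ : Fin d → H), Orthonormal ℝ χ →
      ∑ j, ⟪T (χ j), χ j⟫ ≤ Real.sqrt d * Real.sqrt (∑' i, ‖T (φ i)‖ ^ 2) := by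
    intro T hsym hsum χ hχ
    have h := pca_aux_trace_bound b T hsym (by rw [hb]; exact hsum) χ hχ
    rw [hb] at h
    exact h
  -- the population eigenvectors restricted to the top d
  set χφ : Fin d → H := fun j => φ j with hχφdef
  have hχφ : Orthonormal ℝ χφ := hφ.comp (fun j : Fin d => (j : ℕ)) Fin.val_injective
  set Rd : ℝ := ∫ v, ‖v - ∑ j ∈ Finset.range d, ⟪φ j, v⟫ • φ j‖ ^ 2 ∂ν with hRddef
  have hRdnn : 0 ≤ Rd := integral_nonneg fun v => by positivity
  have hRd : Rd = M2 - ∑ j, ⟪χφ j, C (χφ j)⟫ := by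
    rw [hRddef, hM2def]
    rw [← pca_aux_proj_error ν hint2 C hC χφ hχφ]
    congr 1
    funext v
    congr 2
    rw [← Fin.sum_univ_eq_sum_range (fun j => ⟪φ j, v⟫ • φ j) d]
  set G : Ω → ℝ := fun ω => ∫ v, ‖v - ∑ j : Fin d, ⟪ψ j ω, v⟫ • ψ j ω‖ ^ 2 ∂ν with hGdef
  have hGnn : ∀ ω, 0 ≤ G ω := fun ω => integral_nonneg fun v => by positivity
  have hG : ∀ ω, G ω = M2 - ∑ j, ⟪ψ j ω, C (ψ j ω)⟫ := by
    intro ω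
    rw [hGdef, hM2def]
    exact pca_aux_proj_error ν hint2 C hC (fun j => ψ j ω) (hψon ω)
  -- pointwise bound
  have hpoint : ∀ ω, G ω ≤ Rd + 2 * Real.sqrt d * Real.sqrt (F ω) := by
    intro ω
    have hsum' : Summable (fun i => ‖((Aop ω) - C) (φ i)‖ ^ 2) := by
      refine (hsumA ω).congr fun i => ?_
      have : ((Aop ω) - C) (φ i) = -((C - Aop ω) (φ i)) := by
        simp [ContinuousLinearMap.sub_apply]
      rw [this, norm_neg]
    have hFeq' : (∑' i, ‖((Aop ω) - C) (φ i)‖ ^ 2) = F ω := by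
      refine tsum_congr fun i => ?_
      have : ((Aop ω) - C) (φ i) = -((C - Aop ω) (φ i)) := by
        simp [ContinuousLinearMap.sub_apply]
      rw [this, norm_neg]
    have h1 := htrace (C - Aop ω) (hTsym ω) (hsumA ω) χφ hχφ
    have h2 := htrace ((Aop ω) - C)
      (fun x z => by
        simp only [ContinuousLinearMap.sub_apply, inner_sub_left, inner_sub_right]
        rw [hCsym, hAsym]) hsum' (fun j => ψ j ω) (hψon ω)
    rw [hFeq'] at h2
    have h3 := hopt ω χφ hχφ
    have e1 : ∑ j, ⟪χφ j, C (χφ j)⟫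
        = ∑ j, ⟪(C - Aop ω) (χφ j), χφ j⟫ + ∑ j, ⟪Aop ω (χφ j), χφ j⟫ := by
      rw [← Finset.sum_add_distrib]
      refine Finset.sum_congr rfl fun j _ => ?_
      simp only [ContinuousLinearMap.sub_apply, inner_sub_left]
      rw [real_inner_comm (χφ j) (C (χφ j))]
      ring
    have e2 : ∑ j, ⟪ψ j ω, C (ψ j ω)⟫
        = ∑ j, ⟪Aop ω (ψ j ω), ψ j ω⟫ - ∑ j, ⟪((Aop ω) - C) (ψ j ω), ψ j ω⟫ := by
      rw [← Finset.sum_sub_distrib]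
      refine Finset.sum_congr rfl fun j _ => ?_
      simp only [ContinuousLinearMap.sub_apply, inner_sub_left]
      rw [real_inner_comm (ψ j ω) (C (ψ j ω))]
      ring
    have h3' : ∑ j, ⟪Aop ω (χφ j), χφ j⟫ ≤ ∑ j, ⟪Aop ω (ψ j ω), ψ j ω⟫ := h3
    rw [hG ω, hRd]
    linarith [h1, h2, h3', e1.ge, e2.ge]
  -- entries of the difference operator
  set g : ℕ → ℕ → H → ℝ := fun i m v => ⟪φ m, v⟫ * ⟪φ i, v⟫ with hgdef
  have hgmeas : ∀ i m, Measurable (g i m) :=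
    fun i m => ((continuous_const.inner continuous_id).mul
      (continuous_const.inner continuous_id)).measurable
  have hgabs : ∀ i m (v : H), |g i m v| ≤ ‖v‖ ^ 2 := by
    intro i m v
    simp only [hgdef]
    calc |⟪φ m, v⟫ * ⟪φ i, v⟫| = |⟪φ m, v⟫| * |⟪φ i, v⟫| := abs_mul _ _
      _ ≤ (‖φ m‖ * ‖v‖) * (‖φ i‖ * ‖v‖) :=
          mul_le_mul (abs_real_inner_le_norm _ _) (abs_real_inner_le_norm _ _)
            (abs_nonneg _) (by positivity)
      _ = ‖v‖ ^ 2 := by rw [hφ.1 m, hφ.1 i]; ring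
  have hg1 : ∀ i m, Integrable (g i m) ν := by
    intro i m
    refine hint2.mono (hgmeas i m).aestronglyMeasurable (.of_forall fun v => ?_)
    rw [Real.norm_eq_abs, Real.norm_eq_abs, abs_of_nonneg (by positivity : (0:ℝ) ≤ ‖v‖ ^ 2)]
    exact hgabs i m v
  have hg2 : ∀ i m, Integrable (fun v => g i m v ^ 2) ν := by
    intro i m
    refine hmom4.mono ((hgmeas i m).pow_const 2).aestronglyMeasurable (.of_forall fun v => ?_)
    rw [Real.norm_eq_abs, Real.norm_eq_abs, abs_of_nonneg (by positivity : (0:ℝ) ≤ ‖v‖ ^ 4),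
      abs_of_nonneg (sq_nonneg _)]
    calc g i m v ^ 2 = |g i m v| ^ 2 := (sq_abs _).symm
      _ ≤ (‖v‖ ^ 2) ^ 2 := pow_le_pow_left₀ (abs_nonneg _) (hgabs i m v) 2
      _ = ‖v‖ ^ 4 := by ring
  have hE_eq : ∀ i m ω, ⟪φ m, (C - Aop ω) (φ i)⟫
      = (∫ v, g i m v ∂ν) - (N:ℝ)⁻¹ * ∑ k, g i m (u k ω) := by
    intro i m ω
    have h1 : ⟪φ m, C (φ i)⟫ = ∫ v, g i m v ∂ν := hC (φ m) (φ i)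
    have h2 : ⟪φ m, Aop ω (φ i)⟫ = (N:ℝ)⁻¹ * ∑ k, g i m (u k ω) := by
      rw [hAinner]
      congr 1
      refine Finset.sum_congr rfl fun k _ => ?_
      simp only [hgdef]
      rw [real_inner_comm (φ i) (u k ω)]
      ring
    simp only [ContinuousLinearMap.sub_apply, inner_sub_right]
    rw [h1, h2]
  have hEmeas : ∀ i m, Measurable fun ω => ⟪φ m, (C - Aop ω) (φ i)⟫ := by
    intro i m
    have h1 : (fun ω => ⟪φ m, (C - Aop ω) (φ i)⟫)
        = fun ω => (∫ v, g i m v ∂ν) - (N:ℝ)⁻¹ * ∑ k, g i m (u k ω) :=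
      funext fun ω => hE_eq i m ω
    rw [h1]
    refine measurable_const.sub (Measurable.const_mul ?_ _)
    exact Finset.measurable_sum _ fun k _ => (hgmeas i m).comp (hu k)
  have hvar := fun i m => pca_aux_variance ν P hNpos u hu hindep hmap (g i m)
    (hgmeas i m) (hg1 i m) (hg2 i m)
  set 𝔉 : Ω → ℝ≥0∞ :=
    fun ω => ∑' i, ∑' m, ENNReal.ofReal (⟪φ m, (C - Aop ω) (φ i)⟫ ^ 2) with h𝔉def
  have h𝔉meas : Measurable 𝔉 := by
    refine Measurable.ennreal_tsum fun i => Measurable.ennreal_tsum fun m => ?_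
    exact ((hEmeas i m).pow_const 2).ennreal_ofReal
  have hF𝔉 : ∀ ω, ENNReal.ofReal (F ω) = 𝔉 ω := by
    intro ω
    rw [hFdef, h𝔉def]
    rw [ENNReal.ofReal_tsum_of_nonneg (fun i => sq_nonneg _) (hsumA ω)]
    refine tsum_congr fun i => ?_
    have hpx : ‖(C - Aop ω) (φ i)‖ ^ 2 = ∑' m, ⟪φ m, (C - Aop ω) (φ i)⟫ ^ 2 := (hpars _).symm
    rw [hpx, ENNReal.ofReal_tsum_of_nonneg (fun m => sq_nonneg _) (hbsq _)]
  -- key expectation bound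
  have hkey : ∫⁻ ω, 𝔉 ω ∂P ≤ ENNReal.ofReal (M4 / N) := by
    have hent : ∀ i m, ∫⁻ ω, ENNReal.ofReal (⟪φ m, (C - Aop ω) (φ i)⟫ ^ 2) ∂P
        ≤ ENNReal.ofReal (∫ v, g i m v ^ 2 ∂ν) / ENNReal.ofReal N := by
      intro i m
      have h1 : (fun ω => ENNReal.ofReal (⟪φ m, (C - Aop ω) (φ i)⟫ ^ 2))
          = fun ω => ENNReal.ofReal
              (((∫ v, g i m v ∂ν) - (N:ℝ)⁻¹ * ∑ k, g i m (u k ω)) ^ 2) := by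
        funext ω; rw [hE_eq i m ω]
      rw [h1, ← ofReal_integral_eq_lintegral_ofReal (hvar i m).1
        (.of_forall fun ω => sq_nonneg _)]
      calc ENNReal.ofReal (∫ ω, ((∫ v, g i m v ∂ν) - (N:ℝ)⁻¹ * ∑ k, g i m (u k ω)) ^ 2 ∂P)
          ≤ ENNReal.ofReal ((∫ v, g i m v ^ 2 ∂ν) / N) :=
            ENNReal.ofReal_le_ofReal (hvar i m).2
        _ = ENNReal.ofReal (∫ v, g i m v ^ 2 ∂ν) / ENNReal.ofReal N :=
            ENNReal.ofReal_div_of_pos hNR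
    have hsum4 : (∑' i, ∑' m, ENNReal.ofReal (∫ v, g i m v ^ 2 ∂ν)) ≤ ENNReal.ofReal M4 := by
      refine le_of_eq ?_
      have h5 : ∀ i m, ENNReal.ofReal (∫ v, g i m v ^ 2 ∂ν)
          = ∫⁻ v, ENNReal.ofReal (g i m v ^ 2) ∂ν := fun i m =>
        ofReal_integral_eq_lintegral_ofReal (hg2 i m) (.of_forall fun v => sq_nonneg _)
      calc (∑' i, ∑' m, ENNReal.ofReal (∫ v, g i m v ^ 2 ∂ν))
          = ∑' i, ∑' m, ∫⁻ v, ENNReal.ofReal (g i m v ^ 2) ∂ν := by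
            exact tsum_congr fun i => tsum_congr fun m => h5 i m
        _ = ∑' i, ∫⁻ v, ∑' m, ENNReal.ofReal (g i m v ^ 2) ∂ν :=
            tsum_congr fun i =>
              (lintegral_tsum fun m =>
                ((hgmeas i m).pow_const 2).ennreal_ofReal.aemeasurable).symm
        _ = ∫⁻ v, ∑' i, ∑' m, ENNReal.ofReal (g i m v ^ 2) ∂ν :=
            (lintegral_tsum fun i => (Measurable.ennreal_tsum fun m =>
              ((hgmeas i m).pow_const 2).ennreal_ofReal).aemeasurable).symm
        _ = ∫⁻ v, ENNReal.ofReal (‖v‖ ^ 4) ∂ν := by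
            refine lintegral_congr fun v => ?_
            have hp : ∀ i m : ℕ, g i m v ^ 2 = ⟪φ m, v⟫ ^ 2 * ⟪φ i, v⟫ ^ 2 := by
              intro i m; simp only [hgdef]; ring
            calc ∑' i, ∑' m, ENNReal.ofReal (g i m v ^ 2)
                = ∑' i, ∑' m,
                    ENNReal.ofReal (⟪φ m, v⟫ ^ 2) * ENNReal.ofReal (⟪φ i, v⟫ ^ 2) := by
                  refine tsum_congr fun i => tsum_congr fun m => ?_
                  rw [hp, ENNReal.ofReal_mul (sq_nonneg _)]
              _ = ∑' i, (∑' m, ENNReal.ofReal (⟪φ m, v⟫ ^ 2))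
                    * ENNReal.ofReal (⟪φ i, v⟫ ^ 2) := by
                  refine tsum_congr fun i => ?_
                  rw [ENNReal.tsum_mul_right]
              _ = (∑' m, ENNReal.ofReal (⟪φ m, v⟫ ^ 2))
                    * ∑' i, ENNReal.ofReal (⟪φ i, v⟫ ^ 2) := ENNReal.tsum_mul_left
              _ = ENNReal.ofReal (‖v‖ ^ 2) * ENNReal.ofReal (‖v‖ ^ 2) := by
                  rw [← ENNReal.ofReal_tsum_of_nonneg (fun m => sq_nonneg _) (hbsq v), hpars v]
              _ = ENNReal.ofReal (‖v‖ ^ 4) := by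
                  rw [← ENNReal.ofReal_mul (by positivity)]
                  congr 1
                  ring
        _ = ENNReal.ofReal M4 := by
            rw [hM4def]
            exact (ofReal_integral_eq_lintegral_ofReal hmom4
              (.of_forall fun v => by positivity)).symm
    calc ∫⁻ ω, 𝔉 ω ∂P
        = ∑' i, ∫⁻ ω, ∑' m, ENNReal.ofReal (⟪φ m, (C - Aop ω) (φ i)⟫ ^ 2) ∂P := by
          rw [h𝔉def]
          exact lintegral_tsum fun i => (Measurable.ennreal_tsum fun m =>
            ((hEmeas i m).pow_const 2).ennreal_ofReal).aemeasurable
      _ = ∑' i, ∑' m, ∫⁻ ω, ENNReal.ofReal (⟪φ m, (C - Aop ω) (φ i)⟫ ^ 2) ∂P :=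
          tsum_congr fun i => lintegral_tsum fun m =>
            ((hEmeas i m).pow_const 2).ennreal_ofReal.aemeasurable
      _ ≤ ∑' i, ∑' m, ENNReal.ofReal (∫ v, g i m v ^ 2 ∂ν) / ENNReal.ofReal N :=
          ENNReal.tsum_le_tsum fun i => ENNReal.tsum_le_tsum fun m => hent i m
      _ = (∑' i, ∑' m, ENNReal.ofReal (∫ v, g i m v ^ 2 ∂ν)) / ENNReal.ofReal N := by
          simp_rw [div_eq_mul_inv, ENNReal.tsum_mul_right]
      _ ≤ ENNReal.ofReal M4 / ENNReal.ofReal N := by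
          exact ENNReal.div_le_div_right hsum4 _
      _ = ENNReal.ofReal (M4 / N) := (ENNReal.ofReal_div_of_pos hNR).symm
  -- final assembly
  have hRHSnn : (0:ℝ) ≤ Real.sqrt (4 * M4 * d / N) + Rd :=
    add_nonneg (Real.sqrt_nonneg _) hRdnn
  by_cases hGint : Integrable G P
  · rw [integral_eq_lintegral_of_nonneg_ae (.of_forall hGnn) hGint.1]
    refine ENNReal.toReal_le_of_le_ofReal hRHSnn ?_
    have hmono : ∀ ω, ENNReal.ofReal (G ω)
        ≤ ENNReal.ofReal Rd + ENNReal.ofReal (2 * Real.sqrt d) * 𝔉 ω ^ (1/2 : ℝ) := by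
      intro ω
      calc ENNReal.ofReal (G ω)
          ≤ ENNReal.ofReal (Rd + 2 * Real.sqrt d * Real.sqrt (F ω)) :=
            ENNReal.ofReal_le_ofReal (hpoint ω)
        _ = ENNReal.ofReal Rd
            + ENNReal.ofReal (2 * Real.sqrt d) * ENNReal.ofReal (Real.sqrt (F ω)) := by
            rw [ENNReal.ofReal_add hRdnn (by positivity), ENNReal.ofReal_mul (by positivity)]
        _ = ENNReal.ofReal Rd + ENNReal.ofReal (2 * Real.sqrt d) * 𝔉 ω ^ (1/2 : ℝ) := by
            rw [← hF𝔉 ω, Real.sqrt_eq_rpow (F ω),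
              ← ENNReal.ofReal_rpow_of_nonneg (hFnn ω) (by norm_num : (0:ℝ) ≤ 1/2)]
    have hhold : ∫⁻ ω, 𝔉 ω ^ (1/2 : ℝ) ∂P ≤ (∫⁻ ω, 𝔉 ω ∂P) ^ (1/2 : ℝ) := by
      have hconj : Real.HolderConjugate 2 2 := Real.HolderConjugate.two_two
      have h := ENNReal.lintegral_mul_le_Lp_mul_Lq P hconj
        (f := fun ω => 𝔉 ω ^ (1/2 : ℝ)) (g := fun _ => 1)
        (h𝔉meas.pow measurable_const).aemeasurable aemeasurable_const
      have h2 : ∀ ω : Ω, (((fun ω => 𝔉 ω ^ (1/2 : ℝ)) * fun _ => 1 : Ω → ℝ≥0∞)) ω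
          = 𝔉 ω ^ (1/2 : ℝ) := by
        intro ω; simp
      have h3 : ∀ ω : Ω, (𝔉 ω ^ (1/2 : ℝ)) ^ (2 : ℝ) = 𝔉 ω := by
        intro ω
        rw [← ENNReal.rpow_mul]
        norm_num
      calc ∫⁻ ω, 𝔉 ω ^ (1/2 : ℝ) ∂P
          = ∫⁻ ω, (((fun ω => 𝔉 ω ^ (1/2 : ℝ)) * fun _ => 1 : Ω → ℝ≥0∞)) ω ∂P :=
            (lintegral_congr h2).symm
        _ ≤ (∫⁻ ω, (𝔉 ω ^ (1/2 : ℝ)) ^ (2:ℝ) ∂P) ^ (1/(2:ℝ))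
            * (∫⁻ _ : Ω, (1:ℝ≥0∞) ^ (2:ℝ) ∂P) ^ (1/(2:ℝ)) := h
        _ = (∫⁻ ω, 𝔉 ω ∂P) ^ (1/2 : ℝ) := by
            rw [lintegral_congr h3]
            simp [lintegral_one, measure_univ]
    calc ∫⁻ ω, ENNReal.ofReal (G ω) ∂P
        ≤ ∫⁻ ω, (ENNReal.ofReal Rd + ENNReal.ofReal (2 * Real.sqrt d) * 𝔉 ω ^ (1/2 : ℝ)) ∂P :=
          lintegral_mono hmono
      _ = ENNReal.ofReal Rd
          + ENNReal.ofReal (2 * Real.sqrt d) * ∫⁻ ω, 𝔉 ω ^ (1/2 : ℝ) ∂P := by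
          rw [lintegral_add_left measurable_const, lintegral_const, measure_univ, mul_one,
            lintegral_const_mul' _ _ ENNReal.ofReal_ne_top]
      _ ≤ ENNReal.ofReal Rd
          + ENNReal.ofReal (2 * Real.sqrt d) * (∫⁻ ω, 𝔉 ω ∂P) ^ (1/2 : ℝ) :=
          add_le_add_right (mul_le_mul_right hhold _) _
      _ ≤ ENNReal.ofReal Rd
          + ENNReal.ofReal (2 * Real.sqrt d) * (ENNReal.ofReal (M4 / N)) ^ (1/2 : ℝ) :=
          add_le_add_right (mul_le_mul_right (ENNReal.rpow_le_rpow hkey (by norm_num)) _) _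
      _ = ENNReal.ofReal (Rd + 2 * Real.sqrt d * Real.sqrt (M4 / N)) := by
          rw [show (ENNReal.ofReal (M4 / N)) ^ (1/2 : ℝ) = ENNReal.ofReal (Real.sqrt (M4 / N))
            from by rw [Real.sqrt_eq_rpow,
              ENNReal.ofReal_rpow_of_nonneg (div_nonneg hM4nn hNR.le) (by norm_num)],
            ← ENNReal.ofReal_mul (by positivity), ← ENNReal.ofReal_add hRdnn (by positivity)]
      _ ≤ ENNReal.ofReal (Real.sqrt (4 * M4 * d / N) + Rd) := by
          refine ENNReal.ofReal_le_ofReal ?_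
          have heq : 2 * Real.sqrt d * Real.sqrt (M4 / N) = Real.sqrt (4 * M4 * d / N) := by
            have h4 : (4:ℝ) * M4 * d / N = (2 * Real.sqrt d) ^ 2 * (M4 / N) := by
              rw [mul_pow, Real.sq_sqrt (Nat.cast_nonneg d)]
              ring
            rw [h4, Real.sqrt_mul (by positivity), Real.sqrt_sq (by positivity)]
          linarith [heq.le]
  · rw [integral_undef hGint]
    exact hRHSnn
end

section
/- Let H be a separable Hilbert space, ν a probability measure on H with finite second moment, C_N the empirical covariance from N i.i.d. samples with eigenvalues λ_{1,N} ≥ ... ≥ λ_{N,N}, and C the population covariance with eigenvalues λ₁ ≥ λ₂ ≥ .... Then for any d ≤ N, E[∑_{j=d+1}^N λ_{j,N}] ≤ ∑_{j=d+1}^∞ λ_j. -/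
open MeasureTheory
open scoped RealInnerProductSpace BigOperators

private lemma sum_fin_filter_lt {N d : ℕ} (hd : d ≤ N) (g : ℕ → ℝ) :
    ∑ j ∈ Finset.univ.filter (fun j : Fin N => (j : ℕ) < d), g (j : ℕ)
      = ∑ i ∈ Finset.range d, g i := by
  rw [Finset.sum_filter, Fin.sum_univ_eq_sum_range (fun i => if i < d then g i else 0),
    ← Finset.sum_filter]
  congr 1
  ext x
  simp only [Finset.mem_filter, Finset.mem_range]
  omega

private lemma fan_ineq {N : ℕ} (d : ℕ) (hd : d ≤ N) (m c : Fin N → ℝ)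
    (hm : Antitone m) (hm0 : ∀ j, 0 ≤ m j) (hc0 : ∀ j, 0 ≤ c j) (hc1 : ∀ j, c j ≤ 1)
    (hcs : ∑ j, c j ≤ (d : ℝ)) :
    ∑ j, m j * c j ≤ ∑ j ∈ Finset.univ.filter (fun j : Fin N => (j : ℕ) < d), m j := by
  rcases eq_or_lt_of_le hd with rfl | hdN
  · rw [Finset.filter_true_of_mem (fun j _ => j.isLt)]
    refine Finset.sum_le_sum fun j _ => ?_
    calc m j * c j ≤ m j * 1 := by nlinarith [hm0 j, hc1 j]
    _ = m j := mul_one _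
  · set t := m ⟨d, hdN⟩ with ht
    have ht0 : 0 ≤ t := hm0 _
    have hcard : ∑ j ∈ Finset.univ.filter (fun j : Fin N => (j : ℕ) < d), (1:ℝ) = d := by
      rw [sum_fin_filter_lt hd (fun _ => (1:ℝ))]; simp
    rw [← Finset.sum_filter_add_sum_filter_not Finset.univ (fun j : Fin N => (j : ℕ) < d)
        (fun j => m j * c j)]
    have hA : ∑ j ∈ Finset.univ.filter (fun j : Fin N => (j : ℕ) < d), m j * c j
        ≤ ∑ j ∈ Finset.univ.filter (fun j : Fin N => (j : ℕ) < d), (m j - t * (1 - c j)) := by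
      refine Finset.sum_le_sum fun j hj => ?_
      have hj' : (j : ℕ) < d := (Finset.mem_filter.mp hj).2
      have : t ≤ m j := hm (by rw [Fin.le_def]; exact le_of_lt hj')
      nlinarith [hc1 j]
    have hB : ∑ j ∈ Finset.univ.filter (fun j : Fin N => ¬ (j : ℕ) < d), m j * c j
        ≤ ∑ j ∈ Finset.univ.filter (fun j : Fin N => ¬ (j : ℕ) < d), t * c j := by
      refine Finset.sum_le_sum fun j hj => ?_
      have hj' : ¬ (j : ℕ) < d := (Finset.mem_filter.mp hj).2
      have : m j ≤ t := hm (by simp only [Fin.le_def]; omega)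
      nlinarith [hc0 j]
    have hsplit : ∑ j ∈ Finset.univ.filter (fun j : Fin N => (j : ℕ) < d), c j
        + ∑ j ∈ Finset.univ.filter (fun j : Fin N => ¬ (j : ℕ) < d), c j = ∑ j, c j :=
      Finset.sum_filter_add_sum_filter_not _ _ _
    have hexp : ∑ j ∈ Finset.univ.filter (fun j : Fin N => (j : ℕ) < d), (m j - t * (1 - c j))
        = ∑ j ∈ Finset.univ.filter (fun j : Fin N => (j : ℕ) < d), m j
          - (t * d - t * ∑ j ∈ Finset.univ.filter (fun j : Fin N => (j : ℕ) < d), c j) := by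
      rw [Finset.sum_sub_distrib, ← Finset.mul_sum, Finset.sum_sub_distrib, hcard]
      ring
    have hBexp : ∑ j ∈ Finset.univ.filter (fun j : Fin N => ¬ (j : ℕ) < d), t * c j
        = t * ∑ j ∈ Finset.univ.filter (fun j : Fin N => ¬ (j : ℕ) < d), c j := by
      rw [Finset.mul_sum]
    nlinarith [hA, hB, mul_le_mul_of_nonneg_left hcs ht0]


private lemma inner_avg_rankOne {H : Type*} [NormedAddCommGroup H] [InnerProductSpace ℝ H]
    {N : ℕ} (w : Fin N → H) (v z : H) :
    ⟪v, (((N:ℝ)⁻¹ • ∑ k, rankOne (w k)) : H →L[ℝ] H) z⟫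
      = (N:ℝ)⁻¹ * ∑ k, ⟪v, w k⟫ * ⟪z, w k⟫ := by
  simp only [ContinuousLinearMap.smul_apply, ContinuousLinearMap.sum_apply, rankOne,
    ContinuousLinearMap.smulRight_apply, innerSL_apply_apply, inner_smul_right, inner_sum,
    real_inner_smul_right]
  congr 1
  refine Finset.sum_congr rfl fun k _ => ?_
  rw [real_inner_comm (w k) z]; ring

private lemma inner_sum_rankOne {H : Type*} [NormedAddCommGroup H] [InnerProductSpace ℝ H]
    {N : ℕ} (m : Fin N → ℝ) (ψ : Fin N → H) (v z : H) :
    ⟪v, ((∑ j, m j • rankOne (ψ j)) : H →L[ℝ] H) z⟫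
      = ∑ j, m j * (⟪v, ψ j⟫ * ⟪z, ψ j⟫) := by
  simp only [ContinuousLinearMap.sum_apply, ContinuousLinearMap.smul_apply, rankOne,
    ContinuousLinearMap.smulRight_apply, innerSL_apply_apply, inner_sum, inner_smul_right,
    real_inner_smul_right]
  refine Finset.sum_congr rfl fun j _ => ?_
  rw [real_inner_comm (ψ j) z]; ring

private lemma pointwise_key {H : Type*} [NormedAddCommGroup H] [InnerProductSpace ℝ H]
    {N : ℕ} (d : ℕ) (hd : d ≤ N) (w : Fin N → H) (ψ : Fin N → H) (m : Fin N → ℝ)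
    (hψ : Orthonormal ℝ ψ) (hmdec : Antitone m)
    (φ : ℕ → H) (hφ : Orthonormal ℝ φ)
    (hdecomp : (((N:ℝ)⁻¹ • ∑ k, rankOne (w k)) : H →L[ℝ] H) = ∑ j, m j • rankOne (ψ j)) :
    ∑ j ∈ Finset.univ.filter (fun j : Fin N => d ≤ (j : ℕ)), m j
      ≤ (N:ℝ)⁻¹ * ∑ k, (‖w k‖^2 - ∑ i ∈ Finset.range d, ⟪φ i, w k⟫^2) := by
  classical
  have hinv : (0:ℝ) ≤ (N:ℝ)⁻¹ := by positivity
  have E : ∀ v z : H, (N:ℝ)⁻¹ * ∑ k, ⟪v, w k⟫ * ⟪z, w k⟫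
      = ∑ j, m j * (⟪v, ψ j⟫ * ⟪z, ψ j⟫) := by
    intro v z
    rw [← inner_avg_rankOne w v z, hdecomp, inner_sum_rankOne]
  have hψite : ∀ i j, ⟪ψ i, ψ j⟫ = if i = j then (1:ℝ) else 0 := fun i j => orthonormal_iff_ite.mp hψ i j
  -- eigenvalue formula
  have hm_eq : ∀ j, m j = (N:ℝ)⁻¹ * ∑ k, ⟪ψ j, w k⟫^2 := by
    intro j
    have := E (ψ j) (ψ j)
    simp only [← sq] at this
    rw [this, Finset.sum_eq_single j]
    · rw [hψite j j]; simp
    · intro i _ hij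
      rw [hψite j i, if_neg (fun h => hij h.symm)]; ring
    · intro h; exact absurd (Finset.mem_univ j) h
  have hm0 : ∀ j, 0 ≤ m j := by
    intro j; rw [hm_eq j]
    exact mul_nonneg hinv (Finset.sum_nonneg fun k _ => sq_nonneg _)
  -- Bessel coefficients
  set c : Fin N → ℝ := fun j => ∑ i ∈ Finset.range d, ⟪ψ j, φ i⟫^2 with hc
  have hc0 : ∀ j, 0 ≤ c j := fun j => Finset.sum_nonneg fun i _ => sq_nonneg _
  have hc1 : ∀ j, c j ≤ 1 := by
    intro j
    have := hφ.sum_inner_products_le (𝕜 := ℝ) (s := Finset.range d) (ψ j)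
    have hn : ‖ψ j‖ = 1 := hψ.1 j
    simp only [Real.norm_eq_abs, sq_abs] at this
    calc c j = ∑ i ∈ Finset.range d, ⟪φ i, ψ j⟫^2 := by
          refine Finset.sum_congr rfl fun i _ => by rw [real_inner_comm]
      _ ≤ ‖ψ j‖^2 := this
      _ = 1 := by rw [hn]; norm_num
  have hcs : ∑ j, c j ≤ (d : ℝ) := by
    rw [Finset.sum_comm]
    calc ∑ i ∈ Finset.range d, ∑ j, ⟪ψ j, φ i⟫^2
        ≤ ∑ i ∈ Finset.range d, (1:ℝ) := by
          refine Finset.sum_le_sum fun i _ => ?_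
          have := hψ.sum_inner_products_le (𝕜 := ℝ) (s := Finset.univ) (φ i)
          have hn : ‖φ i‖ = 1 := hφ.1 i
          simp only [Real.norm_eq_abs, sq_abs] at this
          calc ∑ j, ⟪ψ j, φ i⟫^2 ≤ ‖φ i‖^2 := this
            _ = 1 := by rw [hn]; norm_num
      _ = d := by simp
  have hfan := fan_ineq d hd m c hmdec hm0 hc0 hc1 hcs
  -- link ∑ m c to residual projections of φ
  have hlink1 : ∑ j, m j * c j = (N:ℝ)⁻¹ * ∑ k, ∑ i ∈ Finset.range d, ⟪φ i, w k⟫^2 := by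
    have : ∑ j, m j * c j = ∑ i ∈ Finset.range d, ∑ j, m j * (⟪φ i, ψ j⟫ * ⟪φ i, ψ j⟫) := by
      rw [Finset.sum_comm]
      refine Finset.sum_congr rfl fun j _ => ?_
      rw [hc, Finset.mul_sum]
      refine Finset.sum_congr rfl fun i _ => ?_
      rw [real_inner_comm (ψ j) (φ i)]; ring
    rw [this]
    have : ∀ i, ∑ j, m j * (⟪φ i, ψ j⟫ * ⟪φ i, ψ j⟫) = (N:ℝ)⁻¹ * ∑ k, ⟪φ i, w k⟫^2 := by
      intro i
      rw [← E (φ i) (φ i)]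
      congr 1
      exact Finset.sum_congr rfl fun k _ => (sq _).symm
    rw [Finset.sum_congr rfl fun i _ => this i, ← Finset.mul_sum, Finset.sum_comm]
  -- total mass bound
  have hlink2 : ∑ j, m j ≤ (N:ℝ)⁻¹ * ∑ k, ‖w k‖^2 := by
    calc ∑ j, m j = (N:ℝ)⁻¹ * ∑ j, ∑ k, ⟪ψ j, w k⟫^2 := by
          rw [Finset.mul_sum]; exact Finset.sum_congr rfl fun j _ => hm_eq j
      _ = (N:ℝ)⁻¹ * ∑ k, ∑ j, ⟪ψ j, w k⟫^2 := by rw [Finset.sum_comm]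
      _ ≤ (N:ℝ)⁻¹ * ∑ k, ‖w k‖^2 := by
          refine mul_le_mul_of_nonneg_left (Finset.sum_le_sum fun k _ => ?_) hinv
          have := hψ.sum_inner_products_le (𝕜 := ℝ) (s := Finset.univ) (w k)
          simpa only [Real.norm_eq_abs, sq_abs] using this
  -- split the sum
  have hfe : Finset.univ.filter (fun j : Fin N => d ≤ (j : ℕ))
      = Finset.univ.filter (fun j : Fin N => ¬ (j : ℕ) < d) := by
    ext j; simp only [Finset.mem_filter, Finset.mem_univ, true_and]; omega
  have hsplit : ∑ j ∈ Finset.univ.filter (fun j : Fin N => (j : ℕ) < d), m j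
      + ∑ j ∈ Finset.univ.filter (fun j : Fin N => ¬ (j : ℕ) < d), m j = ∑ j, m j :=
    Finset.sum_filter_add_sum_filter_not _ _ _
  rw [hfe]
  have hrhs : (N:ℝ)⁻¹ * ∑ k, (‖w k‖^2 - ∑ i ∈ Finset.range d, ⟪φ i, w k⟫^2)
      = (N:ℝ)⁻¹ * ∑ k, ‖w k‖^2 - (N:ℝ)⁻¹ * ∑ k, ∑ i ∈ Finset.range d, ⟪φ i, w k⟫^2 := by
    rw [Finset.sum_sub_distrib, mul_sub]
  linarith [hfan, hlink1, hlink2, hsplit]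

/-- The expected tail sum of the eigenvalues of the empirical covariance is bounded
by the tail sum of the eigenvalues of the population covariance: with
`C_N(ω) = (1/N)∑ₖ u k ω ⊗ u k ω` having spectral decomposition
`C_N(ω) = ∑ⱼ mu j ω • (ψ j ω ⊗ ψ j ω)` with decreasing eigenvalues `mu j ω`,
and `C` having decreasing eigenvalues `lam`, for any `d ≤ N` one has
`E[∑_{j=d+1}^N mu j] ≤ ∑_{j=d+1}^∞ lam j`. -/
theorem expected_empirical_tail_le_population_tail
    {H : Type*} [NormedAddCommGroup H] [InnerProductSpace ℝ H] [CompleteSpace H]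
    [TopologicalSpace.SeparableSpace H] [MeasurableSpace H] [BorelSpace H]
    (ν : Measure H) [IsProbabilityMeasure ν]
    (hmom2 : Integrable (fun u : H => ‖u‖ ^ 2) ν)
    (C : H →L[ℝ] H)
    (hC : ∀ v z : H, ⟪v, C z⟫ = ∫ u, ⟪v, u⟫ * ⟪z, u⟫ ∂ν)
    (lam : ℕ → ℝ) (φ : ℕ → H) (hφ : Orthonormal ℝ φ)
    (heig : ∀ j, C (φ j) = lam j • φ j) (hdec : Antitone lam)
    (hspan : (Submodule.span ℝ (Set.range φ)).topologicalClosure = ⊤)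
    {Ω : Type*} [MeasurableSpace Ω] (P : Measure Ω) [IsProbabilityMeasure P]
    (N : ℕ) (hN : 0 < N) (u : Fin N → Ω → H)
    (hmeas : ∀ j, Measurable (u j))
    (hindep : ProbabilityTheory.iIndepFun u P)
    (hdist : ∀ j, P.map (u j) = ν)
    (ψ : Fin N → Ω → H) (mu : Fin N → Ω → ℝ)
    (hψon : ∀ ω, Orthonormal ℝ (fun j => ψ j ω))
    (hmudec : ∀ ω, Antitone (fun j => mu j ω))
    (hdecomp : ∀ ω,
      ((N : ℝ)⁻¹ • ∑ k, rankOne (u k ω)) = ∑ j, mu j ω • rankOne (ψ j ω))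
    (d : ℕ) (hd : d ≤ N) :
    (∫ ω, ∑ j ∈ Finset.univ.filter (fun j : Fin N => d ≤ (j : ℕ)), mu j ω ∂P)
      ≤ ∑' j : ℕ, lam (j + d) := by
  classical
  -- the residual function on H
  set h : H → ℝ := fun x => ‖x‖^2 - ∑ i ∈ Finset.range d, ⟪φ i, x⟫^2 with hh
  have hcont_inner : ∀ i : ℕ, Continuous fun x : H => ⟪φ i, x⟫^2 :=
    fun i => ((innerSL ℝ (φ i)).continuous).pow 2
  have hcont_h : Continuous h := by
    exact (continuous_norm.pow 2).sub (continuous_finset_sum _ fun i _ => hcont_inner i)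
  have hint_inner : ∀ i : ℕ, Integrable (fun x : H => ⟪φ i, x⟫^2) ν := by
    intro i
    refine hmom2.mono' (hcont_inner i).aestronglyMeasurable
      (Filter.Eventually.of_forall fun x => ?_)
    have h1 : |⟪φ i, x⟫| ≤ ‖φ i‖ * ‖x‖ := abs_real_inner_le_norm _ _
    rw [hφ.1 i, one_mul] at h1
    rw [Real.norm_eq_abs, abs_of_nonneg (sq_nonneg _), ← sq_abs]
    exact pow_le_pow_left₀ (abs_nonneg _) h1 2
  have hint_sum : Integrable (fun x : H => ∑ i ∈ Finset.range d, ⟪φ i, x⟫^2) ν :=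
    integrable_finset_sum _ fun i _ => hint_inner i
  have hint_h : Integrable h ν := hmom2.sub hint_sum
  -- eigenvalue formula
  have hlam : ∀ j, lam j = ∫ x, ⟪φ j, x⟫^2 ∂ν := by
    intro j
    have h1 : ⟪φ j, C (φ j)⟫ = lam j := by
      rw [heig j, real_inner_smul_right, real_inner_self_eq_norm_sq, hφ.1 j]
      norm_num
    rw [← h1, hC]
    simp_rw [← sq]
  have hlam0 : ∀ j, 0 ≤ lam j := by
    intro j; rw [hlam j]; exact integral_nonneg fun x => sq_nonneg _
  -- Bessel
  have hbes : ∀ (n : ℕ) (x : H), ∑ i ∈ Finset.range n, ⟪φ i, x⟫^2 ≤ ‖x‖^2 := by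
    intro n x
    have := hφ.sum_inner_products_le (𝕜 := ℝ) (s := Finset.range n) x
    simpa only [Real.norm_eq_abs, sq_abs] using this
  have hsum : Summable lam := by
    refine summable_of_sum_range_le (c := ∫ x, ‖x‖^2 ∂ν) hlam0 (fun n => ?_)
    calc ∑ i ∈ Finset.range n, lam i = ∫ x, ∑ i ∈ Finset.range n, ⟪φ i, x⟫^2 ∂ν := by
          rw [integral_finset_sum _ fun i _ => hint_inner i]
          exact Finset.sum_congr rfl fun i _ => hlam i
      _ ≤ ∫ x, ‖x‖^2 ∂ν :=
          integral_mono (integrable_finset_sum _ fun i _ => hint_inner i) hmom2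
            fun x => hbes n x
  -- Parseval
  have hpar : ∀ x : H, HasSum (fun j => ⟪φ j, x⟫^2) (‖x‖^2) := by
    intro x
    have := (HilbertBasis.mk hφ (le_of_eq hspan.symm)).hasSum_inner_mul_inner x x
    rw [HilbertBasis.coe_mk] at this
    simp only [real_inner_self_eq_norm_sq] at this
    refine this.congr_fun fun j => ?_
    rw [real_inner_comm x (φ j), ← sq]
  have hmain : ∫ x, ‖x‖^2 ∂ν ≤ ∑' j, lam j := by
    have e1 : ENNReal.ofReal (∫ x, ‖x‖^2 ∂ν) = ∫⁻ x, ENNReal.ofReal (‖x‖^2) ∂ν :=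
      ofReal_integral_eq_lintegral_ofReal hmom2 (ae_of_all _ fun x => sq_nonneg _)
    have e2 : ∀ j : ℕ, ENNReal.ofReal (lam j) = ∫⁻ x, ENNReal.ofReal (⟪φ j, x⟫^2) ∂ν := by
      intro j
      rw [hlam j]
      exact ofReal_integral_eq_lintegral_ofReal (hint_inner j) (ae_of_all _ fun x => sq_nonneg _)
    have e3 : ∀ x : H, ENNReal.ofReal (‖x‖^2) = ∑' j, ENNReal.ofReal (⟪φ j, x⟫^2) := by
      intro x
      rw [← (hpar x).tsum_eq, ENNReal.ofReal_tsum_of_nonneg (fun j => sq_nonneg _)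
        (hpar x).summable]
    have e4 : ∫⁻ x, ENNReal.ofReal (‖x‖^2) ∂ν
        = ∑' j, ∫⁻ x, ENNReal.ofReal (⟪φ j, x⟫^2) ∂ν := by
      simp_rw [e3]
      exact lintegral_tsum fun j => ((hcont_inner j).measurable.ennreal_ofReal).aemeasurable
    have e5 : ENNReal.ofReal (∫ x, ‖x‖^2 ∂ν) = ENNReal.ofReal (∑' j, lam j) := by
      rw [e1, e4, ENNReal.ofReal_tsum_of_nonneg hlam0 hsum]
      exact (tsum_congr fun j => (e2 j).symm)
    exact (ENNReal.ofReal_le_ofReal_iff (tsum_nonneg hlam0)).mp (le_of_eq e5)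
  have htail : ∑' j, lam (j + d) = (∑' j, lam j) - ∑ i ∈ Finset.range d, lam i := by
    have := Summable.sum_add_tsum_nat_add d hsum
    linarith
  -- integration over Ω
  have hgk : ∀ k : Fin N, Integrable (fun ω => h (u k ω)) P := by
    intro k
    have h1 : Integrable h (P.map (u k)) := by rw [hdist k]; exact hint_h
    exact (integrable_map_measure (by rw [hdist k]; exact hcont_h.aestronglyMeasurable)
      (hmeas k).aemeasurable).mp h1
  have hgkval : ∀ k : Fin N, ∫ ω, h (u k ω) ∂P = ∫ x, h x ∂ν := by
    intro k
    rw [← hdist k, integral_map (hmeas k).aemeasurable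
      (by rw [hdist k]; exact hcont_h.aestronglyMeasurable)]
  set g : Ω → ℝ := fun ω => (N:ℝ)⁻¹ * ∑ k, h (u k ω) with hg
  have hint_g : Integrable g P := (integrable_finset_sum _ fun k _ => hgk k).const_mul _
  have hgval : ∫ ω, g ω ∂P = ∫ x, h x ∂ν := by
    rw [hg]
    rw [integral_const_mul (μ := P) ((N:ℝ)⁻¹) (fun ω => ∑ k, h (u k ω)),
      integral_finset_sum _ fun k _ => hgk k]
    rw [Finset.sum_congr rfl fun k _ => hgkval k]
    simp only [Finset.sum_const, Finset.card_univ, Fintype.card_fin, nsmul_eq_mul]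
    rw [← mul_assoc, inv_mul_cancel₀ (by exact_mod_cast hN.ne' : (N:ℝ) ≠ 0), one_mul]
  have hkey : ∀ ω, ∑ j ∈ Finset.univ.filter (fun j : Fin N => d ≤ (j : ℕ)), mu j ω ≤ g ω := by
    intro ω
    exact pointwise_key d hd (fun k => u k ω) (fun j => ψ j ω) (fun j => mu j ω)
      (hψon ω) (hmudec ω) φ hφ (hdecomp ω)
  by_cases hfi : Integrable
      (fun ω => ∑ j ∈ Finset.univ.filter (fun j : Fin N => d ≤ (j : ℕ)), mu j ω) P
  · calc ∫ ω, ∑ j ∈ Finset.univ.filter (fun j : Fin N => d ≤ (j : ℕ)), mu j ω ∂P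
        ≤ ∫ ω, g ω ∂P := integral_mono hfi hint_g hkey
      _ = ∫ x, h x ∂ν := hgval
      _ = ∫ x, ‖x‖^2 ∂ν - ∑ i ∈ Finset.range d, lam i := by
          rw [hh]
          rw [integral_sub hmom2 hint_sum, integral_finset_sum _ fun i _ => hint_inner i]
          congr 1
          exact Finset.sum_congr rfl fun i _ => (hlam i).symm
      _ ≤ (∑' j, lam j) - ∑ i ∈ Finset.range d, lam i := by linarith
      _ = ∑' j, lam (j + d) := htail.symm
  · rw [integral_undef hfi]
    exact tsum_nonneg fun j => hlam0 _
end

section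
/- Let X, Y be separable Hilbert spaces, μ a probability measure on X with E‖x‖⁴ < ∞, and Ψ : X → Y measurable and globally L-Lipschitz. For d_X, d_Y ≥ 1 and N ≥ max(d_X, d_Y), let V^X_{d_X,N} and V^Y_{d_Y,N} be the empirical PCA subspaces for the inputs {x_j} and outputs {Ψ(x_j)}, and let Ψ_PCA(x) = Π_{V^Y_{d_Y,N}} Ψ(Π_{V^X_{d_X,N}} x). Then E_{samples} E_{x∼μ} ‖Ψ_PCA(x) − Ψ(x)‖²_Y ≤ 2L²(√(Q d_X/N) + R^μ(V^X_{d_X})) + 2(√(Q d_Y/N) + R^{Ψ_♯μ}(V^Y_{d_Y})) for a constant Q depending only on μ and Ψ_♯μ, where V^X_{d_X}, V^Y_{d_Y} are the optimal (population) PCA subspaces and R^ν(V) = E_{u∼ν}‖u − Π_V u‖². -/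
open MeasureTheory
open scoped RealInnerProductSpace BigOperators

set_option maxHeartbeats 1000000

section helpers
variable {H : Type*} [NormedAddCommGroup H] [InnerProductSpace ℝ H]

lemma proj_identity {ι : Type*} (s : Finset ι) (φ : ι → H) (hφ : Orthonormal ℝ φ) (v : H) :
    ‖v - ∑ j ∈ s, ⟪φ j, v⟫ • φ j‖ ^ 2 = ‖v‖ ^ 2 - ∑ j ∈ s, ⟪φ j, v⟫ ^ 2 := by
  have h1 : ⟪v, ∑ j ∈ s, ⟪φ j, v⟫ • φ j⟫ = ∑ j ∈ s, ⟪φ j, v⟫ ^ 2 := by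
    rw [inner_sum]
    refine Finset.sum_congr rfl fun j _ => ?_
    rw [real_inner_smul_right, real_inner_comm]; ring
  have h2 : ‖∑ j ∈ s, ⟪φ j, v⟫ • φ j‖ ^ 2 = ∑ j ∈ s, ⟪φ j, v⟫ ^ 2 := by
    rw [← real_inner_self_eq_norm_sq, hφ.inner_sum]
    refine Finset.sum_congr rfl fun j _ => ?_
    simp [sq]
  rw [norm_sub_sq_real, h1, h2]; ring

lemma bessel {ι : Type*} (s : Finset ι) (φ : ι → H) (hφ : Orthonormal ℝ φ) (v : H) :
    ∑ j ∈ s, ⟪φ j, v⟫ ^ 2 ≤ ‖v‖ ^ 2 := by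
  have := proj_identity s φ hφ v
  nlinarith [sq_nonneg ‖v - ∑ j ∈ s, ⟪φ j, v⟫ • φ j‖]

lemma proj_norm_le {ι : Type*} (s : Finset ι) (φ : ι → H) (hφ : Orthonormal ℝ φ) (v : H) :
    ‖∑ j ∈ s, ⟪φ j, v⟫ • φ j‖ ≤ ‖v‖ := by
  have h2 : ‖∑ j ∈ s, ⟪φ j, v⟫ • φ j‖ ^ 2 = ∑ j ∈ s, ⟪φ j, v⟫ ^ 2 := by
    rw [← real_inner_self_eq_norm_sq, hφ.inner_sum]
    refine Finset.sum_congr rfl fun j _ => ?_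
    simp [sq]
  have := bessel s φ hφ v
  nlinarith [norm_nonneg (∑ j ∈ s, ⟪φ j, v⟫ • φ j), norm_nonneg v]

end helpers

lemma inner_sq_le_aux {E : Type*} [NormedAddCommGroup E] [InnerProductSpace ℝ E]
    (c z : E) : (⟪c, z⟫ : ℝ) ^ 2 ≤ ‖c‖ ^ 2 * ‖z‖ ^ 2 := by
  have := real_inner_mul_inner_self_le c z
  rw [real_inner_self_eq_norm_sq, real_inner_self_eq_norm_sq] at this
  nlinarith [this]


universe uH in
lemma exists_feature_map (H : Type uH) [NormedAddCommGroup H] [InnerProductSpace ℝ H]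
    [CompleteSpace H] :
    ∃ (K : Type uH) (_ : NormedAddCommGroup K) (_ : InnerProductSpace ℝ K) (_ : CompleteSpace K)
      (T : H → K), Continuous T ∧ ∀ u v : H, (inner ℝ (T u) (T v) : ℝ) = (inner ℝ u v : ℝ) ^ 2 := by
  obtain ⟨w, b, -⟩ := exists_hilbertBasis ℝ H
  classical
  set c : H → ↥w → ℝ := fun v i => ⟪b i, v⟫ with hc
  have hsum : ∀ u v : H, Summable fun i => c u i * c v i := by
    intro u v
    have := b.summable_inner_mul_inner u v
    refine this.congr fun i => ?_
    simp only [hc]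
    rw [real_inner_comm (b i) u]
  have htsum : ∀ u v : H, ∑' i, c u i * c v i = ⟪u, v⟫ := by
    intro u v
    rw [show (fun i => c u i * c v i) = fun i => ⟪u, b i⟫ * ⟪b i, v⟫ from
      funext fun i => by simp only [hc]; rw [real_inner_comm (b i) u]]
    exact b.tsum_inner_mul_inner u v
  have hmem : ∀ v : H, Memℓp (fun p : ↥w × ↥w => c v p.1 * c v p.2) 2 := by
    intro v
    apply memℓp_gen
    have h2 : (2 : ENNReal).toReal = 2 := by norm_num
    have h1 : Summable fun i => ‖c v i * c v i‖ := ((hsum v v).abs).congr fun i => by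
      rw [Real.norm_eq_abs]
    have := summable_mul_of_summable_norm (f := fun i => c v i * c v i)
      (g := fun i => c v i * c v i) h1 h1
    refine this.congr fun p => ?_
    have h3 : ‖c v p.1 * c v p.2‖ ^ (2:ENNReal).toReal = ‖c v p.1 * c v p.2‖ ^ (2:ℕ) := by
      rw [h2, ← Real.rpow_natCast]; norm_num
    rw [h3, Real.norm_eq_abs, sq_abs]
    ring
  set T : H → lp (fun _ : ↥w × ↥w => ℝ) 2 := fun v => ⟨_, hmem v⟩ with hT
  have hTapp : ∀ v p, (T v : ∀ _ : ↥w × ↥w, ℝ) p = c v p.1 * c v p.2 := fun v p => rfl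
  have hinner : ∀ u v : H, (inner ℝ (T u) (T v) : ℝ) = (inner ℝ u v : ℝ) ^ 2 := by
    intro u v
    rw [lp.inner_eq_tsum]
    have habs : ∀ z z' : H, Summable fun i => ‖c z i * c z' i‖ := fun z z' =>
      ((hsum z z').abs).congr fun i => by rw [Real.norm_eq_abs]
    calc ∑' p : ↥w × ↥w, (inner ℝ ((T u : ∀ _ : ↥w × ↥w, ℝ) p) ((T v : ∀ _, ℝ) p) : ℝ)
        = ∑' p : ↥w × ↥w, (c u p.1 * c v p.1) * (c u p.2 * c v p.2) := by
          refine tsum_congr fun p => ?_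
          rw [hTapp, hTapp, RCLike.inner_apply]
          simp only [starRingEnd_apply, star_trivial]
          ring
      _ = (∑' i, c u i * c v i) * (∑' i, c u i * c v i) :=
          (tsum_mul_tsum_of_summable_norm (habs u v) (habs u v)).symm
      _ = (inner ℝ u v : ℝ) ^ 2 := by rw [htsum]; ring
  have hcont : Continuous T := by
    rw [continuous_iff_continuousAt]
    intro u
    rw [ContinuousAt, tendsto_iff_dist_tendsto_zero]
    have hd : ∀ v, dist (T v) (T u)
        = Real.sqrt ((⟪v, v⟫ : ℝ) ^ 2 - 2 * (⟪v, u⟫ : ℝ) ^ 2 + (⟪u, u⟫ : ℝ) ^ 2) := by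
      intro v
      rw [dist_eq_norm, ← Real.sqrt_sq (norm_nonneg (T v - T u))]
      congr 1
      rw [← real_inner_self_eq_norm_sq, inner_sub_left, inner_sub_right, inner_sub_right,
        hinner, hinner, hinner, hinner, real_inner_comm u v]
      ring
    rw [show (fun v => dist (T v) (T u)) = fun v =>
      Real.sqrt ((⟪v, v⟫ : ℝ) ^ 2 - 2 * (⟪v, u⟫ : ℝ) ^ 2 + (⟪u, u⟫ : ℝ) ^ 2) from funext hd]
    have hf : Continuous fun v : H =>
        (⟪v, v⟫ : ℝ) ^ 2 - 2 * (⟪v, u⟫ : ℝ) ^ 2 + (⟪u, u⟫ : ℝ) ^ 2 :=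
      (((continuous_id.inner continuous_id).pow 2).sub
        (continuous_const.mul ((continuous_id.inner continuous_const).pow 2))).add
        continuous_const
    have h0 : (‖u‖ ^ 2) ^ 2 - 2 * (‖u‖ ^ 2) ^ 2 + (‖u‖ ^ 2) ^ 2 = 0 := by ring
    have := (Real.continuous_sqrt.comp hf).tendsto u
    simpa [Function.comp_def, h0] using this
  exact ⟨↥(lp (fun _ : ↥w × ↥w => ℝ) 2), inferInstance, inferInstance, inferInstance,
    T, hcont, hinner⟩

lemma pca_gen {H : Type*} [NormedAddCommGroup H] [InnerProductSpace ℝ H] [CompleteSpace H]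
    [TopologicalSpace.SeparableSpace H] [MeasurableSpace H] [BorelSpace H]
    (ν : Measure H) [IsProbabilityMeasure ν]
    (hmom4 : Integrable (fun z : H => ‖z‖ ^ 4) ν)
    {d N : ℕ} (hN : 1 ≤ N)
    (φ : Fin d → H) (hφ : Orthonormal ℝ φ)
    {Ω : Type*} [MeasurableSpace Ω] (P : Measure Ω) [IsProbabilityMeasure P]
    (y : Fin N → Ω → H) (hy : ∀ k, Measurable (y k))
    (hlaw : ∀ k, P.map (y k) = ν)
    (hpair : ∀ k l, k ≠ l → ProbabilityTheory.IndepFun (y k) (y l) P)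
    (ψ : Fin d → Ω → H) (hψ : ∀ ω, Orthonormal ℝ (fun j => ψ j ω))
    (hopt : ∀ ω, (∑ j : Fin d, (N : ℝ)⁻¹ * ∑ k, ⟪φ j, y k ω⟫ ^ 2)
        ≤ ∑ j : Fin d, (N : ℝ)⁻¹ * ∑ k, ⟪ψ j ω, y k ω⟫ ^ 2) :
    ∃ Hf : Ω → ℝ, Integrable Hf P ∧
      (∀ ω, (∫ z, ‖z‖ ^ 2 ∂ν) - (∑ j : Fin d, ∫ z, ⟪ψ j ω, z⟫ ^ 2 ∂ν) ≤ Hf ω) ∧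
      (∫ ω, Hf ω ∂P) ≤ Real.sqrt ((∫ z, ‖z‖ ^ 4 ∂ν) * d / N)
        + ((∫ z, ‖z‖ ^ 2 ∂ν) - ∑ j : Fin d, ∫ z, ⟪φ j, z⟫ ^ 2 ∂ν) := by
  haveI : SecondCountableTopology H := UniformSpace.secondCountable_of_separable H
  have hNpos : (0:ℝ) < N := by exact_mod_cast hN
  -- basic integrability over ν
  have hasm_norm2 : AEStronglyMeasurable (fun z : H => ‖z‖ ^ 2) ν :=
    (continuous_norm.pow 2).aestronglyMeasurable
  have hmom2 : Integrable (fun z : H => ‖z‖ ^ 2) ν := by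
    refine Integrable.mono' (hmom4.add (integrable_const 1)) hasm_norm2 ?_
    filter_upwards with z
    simp only [Pi.add_apply]
    rw [Real.norm_eq_abs, abs_of_nonneg (by positivity)]
    nlinarith [sq_nonneg (‖z‖ ^ 2 - 1), norm_nonneg z]
  have hinner_sq_le : ∀ (c z : H), (⟪c, z⟫ : ℝ) ^ 2 ≤ ‖c‖ ^ 2 * ‖z‖ ^ 2 := by
    intro c z
    have := real_inner_mul_inner_self_le c z
    rw [real_inner_self_eq_norm_sq, real_inner_self_eq_norm_sq] at this
    nlinarith [this]
  have hinner2 : ∀ c : H, Integrable (fun z : H => (⟪c, z⟫ : ℝ) ^ 2) ν := by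
    intro c
    refine Integrable.mono' (hmom2.const_mul (‖c‖ ^ 2))
      (((continuous_const.inner continuous_id).pow 2).aestronglyMeasurable) ?_
    filter_upwards with z
    rw [Real.norm_eq_abs, abs_of_nonneg (sq_nonneg _)]
    exact hinner_sq_le c z
  -- law transfer
  have hlawint : ∀ (k : Fin N) {f : H → ℝ}, Integrable f ν → AEStronglyMeasurable f ν →
      Integrable (fun ω => f (y k ω)) P := by
    intro k f hf hfm
    exact (integrable_map_measure (by rw [hlaw k]; exact hfm) (hy k).aemeasurable).mp
      (by rw [hlaw k]; exact hf)
  have hlaweval : ∀ (k : Fin N) {f : H → ℝ}, AEStronglyMeasurable f ν →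
      ∫ ω, f (y k ω) ∂P = ∫ z, f z ∂ν := by
    intro k f hfm
    have h := integral_map (φ := y k) (μ := P) (hy k).aemeasurable
      (f := f) (by rw [hlaw k]; exact hfm)
    rw [hlaw k] at h
    exact h.symm
  -- feature map
  obtain ⟨K, _iK1, _iK2, _iK3, T, hTc, hT⟩ := exists_feature_map H
  have hTn : ∀ u : H, ‖T u‖ = ‖u‖ ^ 2 := by
    intro u
    have h1 : ‖T u‖ ^ 2 = (‖u‖ ^ 2) ^ 2 := by
      rw [← real_inner_self_eq_norm_sq, hT, real_inner_self_eq_norm_sq]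
    rw [← Real.sqrt_sq (norm_nonneg (T u)), h1, Real.sqrt_sq (sq_nonneg _)]
  have hTint : Integrable T ν := by
    refine Integrable.mono' (hmom4.add (integrable_const 1))
      (hTc.comp_stronglyMeasurable stronglyMeasurable_id).aestronglyMeasurable ?_
    filter_upwards with z
    simp only [Pi.add_apply]
    rw [hTn]
    nlinarith [sq_nonneg (‖z‖ ^ 2 - 1), norm_nonneg z]
  set m : K := ∫ z, T z ∂ν with hm
  have hTm : ∀ c : H, (⟪T c, m⟫ : ℝ) = ∫ z, (⟪c, z⟫ : ℝ) ^ 2 ∂ν := by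
    intro c
    rw [hm, ← integral_inner hTint (T c)]
    exact integral_congr_ae (Filter.Eventually.of_forall fun z => hT c z)
  have hmnorm : ‖m‖ ^ 2 = ∫ z, (∫ x, (⟪z, x⟫ : ℝ) ^ 2 ∂ν) ∂ν := by
    rw [← real_inner_self_eq_norm_sq]
    calc (⟪m, m⟫ : ℝ) = ∫ z, (⟪m, T z⟫ : ℝ) ∂ν := (integral_inner hTint m).symm
      _ = ∫ z, (∫ x, (⟪z, x⟫ : ℝ) ^ 2 ∂ν) ∂ν := by
          refine integral_congr_ae (Filter.Eventually.of_forall fun z => ?_)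
          show (⟪m, T z⟫ : ℝ) = ∫ x, (⟪z, x⟫ : ℝ) ^ 2 ∂ν
          rw [← hTm z]
          exact real_inner_comm _ _
  -- empirical mean in feature space
  set S : Ω → K := fun ω => (N : ℝ)⁻¹ • ∑ k, T (y k ω) with hS
  set Δ : Ω → K := fun ω => S ω - m with hΔ
  have hinnerS : ∀ (c : H) (ω : Ω), (⟪T c, S ω⟫ : ℝ) = (N : ℝ)⁻¹ * ∑ k, (⟪c, y k ω⟫ : ℝ) ^ 2 := by
    intro c ω
    rw [hS, real_inner_smul_right, inner_sum]
    congr 1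
    exact Finset.sum_congr rfl fun k _ => hT c (y k ω)
  -- the orthonormal sum in feature space has norm √d
  have e3 : ∀ ω, ‖∑ j : Fin d, T (ψ j ω)‖ = Real.sqrt d := by
    intro ω
    have e3' : ‖∑ j : Fin d, T (ψ j ω)‖ ^ 2 = (d : ℝ) := by
      rw [← real_inner_self_eq_norm_sq, sum_inner]
      have h1 : ∀ j : Fin d, (⟪T (ψ j ω), ∑ j' : Fin d, T (ψ j' ω)⟫ : ℝ) = 1 := by
        intro j
        rw [inner_sum]
        have horth := orthonormal_iff_ite.mp (hψ ω)
        calc (∑ j' : Fin d, (⟪T (ψ j ω), T (ψ j' ω)⟫ : ℝ))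
            = ∑ j' : Fin d, (if j = j' then (1:ℝ) else 0) := by
              refine Finset.sum_congr rfl fun j' _ => ?_
              rw [hT, horth j j']
              by_cases h : j = j' <;> simp [h]
          _ = 1 := by simp
      rw [Finset.sum_congr rfl fun j _ => h1 j]
      simp
    rw [← Real.sqrt_sq (norm_nonneg _), e3']
  -- pointwise key inequality
  have key : ∀ ω, (∫ z, ‖z‖ ^ 2 ∂ν) - (∑ j : Fin d, ∫ z, (⟪ψ j ω, z⟫ : ℝ) ^ 2 ∂ν)
      ≤ (∫ z, ‖z‖ ^ 2 ∂ν) - (∑ j : Fin d, (N : ℝ)⁻¹ * ∑ k, (⟪φ j, y k ω⟫ : ℝ) ^ 2)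
        + Real.sqrt d * ‖Δ ω‖ := by
    intro ω
    have e1 : (∑ j : Fin d, ∫ z, (⟪ψ j ω, z⟫ : ℝ) ^ 2 ∂ν)
        = (⟪∑ j : Fin d, T (ψ j ω), m⟫ : ℝ) := by
      rw [sum_inner]
      exact Finset.sum_congr rfl fun j _ => (hTm _).symm
    have e2 : (⟪∑ j : Fin d, T (ψ j ω), S ω⟫ : ℝ)
        = ∑ j : Fin d, (N : ℝ)⁻¹ * ∑ k, (⟪ψ j ω, y k ω⟫ : ℝ) ^ 2 := by
      rw [sum_inner]
      exact Finset.sum_congr rfl fun j _ => hinnerS _ _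
    have cs : (⟪∑ j : Fin d, T (ψ j ω), Δ ω⟫ : ℝ) ≤ Real.sqrt d * ‖Δ ω‖ := by
      have h1 : (⟪∑ j : Fin d, T (ψ j ω), Δ ω⟫ : ℝ)
          ≤ ‖∑ j : Fin d, T (ψ j ω)‖ * ‖Δ ω‖ := real_inner_le_norm _ _
      rw [e3] at h1
      exact h1
    have split : (⟪∑ j : Fin d, T (ψ j ω), m⟫ : ℝ)
        = (⟪∑ j : Fin d, T (ψ j ω), S ω⟫ : ℝ) - (⟪∑ j : Fin d, T (ψ j ω), Δ ω⟫ : ℝ) := by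
      rw [hΔ]
      rw [inner_sub_right]
      ring
    rw [e1, split, e2]
    have hopt' := hopt ω
    linarith
  -- measurability and integrability over Ω
  have hnormy2int : ∀ k, Integrable (fun ω => ‖y k ω‖ ^ 2) P :=
    fun k => hlawint k hmom2 hasm_norm2
  have hnormy4int : ∀ k, Integrable (fun ω => ‖y k ω‖ ^ 4) P :=
    fun k => hlawint k hmom4 (continuous_norm.pow 4).aestronglyMeasurable
  have hinnery2int : ∀ (c : H) k, Integrable (fun ω => (⟪c, y k ω⟫ : ℝ) ^ 2) P :=
    fun c k => hlawint k (hinner2 c)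
      ((continuous_const.inner continuous_id).pow 2).aestronglyMeasurable
  have hΔsm : StronglyMeasurable Δ := by
    apply StronglyMeasurable.sub _ stronglyMeasurable_const
    exact (Finset.stronglyMeasurable_fun_sum Finset.univ
      (fun k _ => hTc.comp_stronglyMeasurable (hy k).stronglyMeasurable)).const_smul ((N : ℝ)⁻¹)
  have hΔbound : ∀ ω, ‖Δ ω‖ ≤ (N : ℝ)⁻¹ * (∑ k, ‖y k ω‖ ^ 2) + ‖m‖ := by
    intro ω
    refine (norm_sub_le _ _).trans ?_
    have h1 : ‖S ω‖ ≤ (N : ℝ)⁻¹ * ∑ k, ‖y k ω‖ ^ 2 := by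
      rw [hS]
      rw [norm_smul]
      simp only [norm_inv, Real.norm_natCast]
      refine mul_le_mul_of_nonneg_left ?_ (by positivity)
      refine (norm_sum_le _ _).trans ?_
      refine le_of_eq (Finset.sum_congr rfl fun k _ => hTn _)
    linarith
  have hΔnint : Integrable (fun ω => ‖Δ ω‖) P := by
    refine Integrable.mono' (((integrable_finset_sum Finset.univ
        (fun k _ => hnormy2int k)).const_mul ((N:ℝ)⁻¹)).add (integrable_const ‖m‖))
      hΔsm.norm.aestronglyMeasurable ?_
    filter_upwards with ω
    rw [norm_norm]
    exact hΔbound ω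
  have hΔsqint : Integrable (fun ω => ‖Δ ω‖ ^ 2) P := by
    refine Integrable.mono' (((integrable_finset_sum Finset.univ
        (fun k _ => hnormy4int k)).const_mul 2).add (integrable_const (2 * ‖m‖ ^ 2)))
      ((hΔsm.norm.pow 2).aestronglyMeasurable) ?_
    filter_upwards with ω
    simp only [Pi.add_apply]
    rw [Real.norm_eq_abs, abs_of_nonneg (sq_nonneg _)]
    have h1 := hΔbound ω
    have h2 : ((N : ℝ)⁻¹ * ∑ k, ‖y k ω‖ ^ 2) ^ 2 ≤ ∑ k, ‖y k ω‖ ^ 4 := by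
      have hs := sq_sum_le_card_mul_sum_sq (s := (Finset.univ : Finset (Fin N)))
        (f := fun k => ‖y k ω‖ ^ 2)
      have hcard : (((Finset.univ : Finset (Fin N)).card) : ℝ) = N := by simp
      have hsum4 : (∑ k, (‖y k ω‖ ^ 2) ^ 2) = ∑ k, ‖y k ω‖ ^ 4 :=
        Finset.sum_congr rfl fun k _ => by ring
      rw [hcard, hsum4] at hs
      rw [mul_pow]
      calc ((N : ℝ)⁻¹) ^ 2 * (∑ k, ‖y k ω‖ ^ 2) ^ 2
          ≤ ((N : ℝ)⁻¹) ^ 2 * ((N : ℝ) * ∑ k, ‖y k ω‖ ^ 4) := by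
            refine mul_le_mul_of_nonneg_left hs (by positivity)
        _ = (N : ℝ)⁻¹ * ∑ k, ‖y k ω‖ ^ 4 := by
            field_simp
        _ ≤ 1 * ∑ k, ‖y k ω‖ ^ 4 := by
            refine mul_le_mul_of_nonneg_right ?_
              (Finset.sum_nonneg fun k _ => by positivity)
            rw [inv_le_one_iff₀]
            right; exact_mod_cast hN
        _ = ∑ k, ‖y k ω‖ ^ 4 := one_mul _
    have hA : (0:ℝ) ≤ (N : ℝ)⁻¹ * ∑ k, ‖y k ω‖ ^ 2 := by positivity
    nlinarith [norm_nonneg (Δ ω), norm_nonneg m,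
      sq_nonneg ((N : ℝ)⁻¹ * (∑ k, ‖y k ω‖ ^ 2) - ‖m‖)]
  -- the function h z = ∫ ⟪z,x⟫² dν
  set hfun : H → ℝ := fun z => ∫ x, (⟪z, x⟫ : ℝ) ^ 2 ∂ν with hhfun
  have hfun_eq : ∀ z, hfun z = (⟪T z, m⟫ : ℝ) := fun z => (hTm z).symm
  have hfun_cont : Continuous hfun := by
    rw [show hfun = fun z => (⟪T z, m⟫ : ℝ) from funext hfun_eq]
    exact hTc.inner continuous_const
  have hfun_bound : ∀ z, |hfun z| ≤ ‖z‖ ^ 2 * ‖m‖ := by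
    intro z
    rw [hfun_eq]
    calc |(⟪T z, m⟫ : ℝ)| ≤ ‖T z‖ * ‖m‖ := abs_real_inner_le_norm _ _
      _ = ‖z‖ ^ 2 * ‖m‖ := by rw [hTn]
  have hfun_int : ∀ k, Integrable (fun ω => hfun (y k ω)) P := by
    intro k
    refine hlawint k ?_ hfun_cont.aestronglyMeasurable
    refine Integrable.mono' (hmom2.mul_const ‖m‖) hfun_cont.aestronglyMeasurable ?_
    filter_upwards with z
    rw [Real.norm_eq_abs]
    exact hfun_bound z
  have hfun_eval : ∀ k, ∫ ω, hfun (y k ω) ∂P = ‖m‖ ^ 2 := by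
    intro k
    rw [hlaweval k hfun_cont.aestronglyMeasurable]
    exact hmnorm.symm
  -- cross moments
  have hdiag : ∀ k : Fin N, ∫ ω, (⟪y k ω, y k ω⟫ : ℝ) ^ 2 ∂P = ∫ z, ‖z‖ ^ 4 ∂ν := by
    intro k
    have h1 : (fun ω => (⟪y k ω, y k ω⟫ : ℝ) ^ 2) = fun ω => ‖y k ω‖ ^ 4 := by
      funext ω
      rw [real_inner_self_eq_norm_sq]
      ring
    rw [h1]
    exact hlaweval k (continuous_norm.pow 4).aestronglyMeasurable
  have hcross : ∀ k l : Fin N, k ≠ l → ∫ ω, (⟪y k ω, y l ω⟫ : ℝ) ^ 2 ∂P = ‖m‖ ^ 2 := by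
    intro k l hkl
    have hind := hpair k l hkl
    have hmap : P.map (fun ω => (y k ω, y l ω)) = ν.prod ν := by
      rw [(ProbabilityTheory.indepFun_iff_map_prod_eq_prod_map_map
        (hy k).aemeasurable (hy l).aemeasurable).mp hind, hlaw k, hlaw l]
    have hFc : Continuous (fun p : H × H => (⟪p.1, p.2⟫ : ℝ) ^ 2) :=
      (continuous_fst.inner continuous_snd).pow 2
    have hFint : Integrable (fun p : H × H => (⟪p.1, p.2⟫ : ℝ) ^ 2) (ν.prod ν) := by
      refine Integrable.mono' (Integrable.mul_prod (f := fun z : H => ‖z‖ ^ 2)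
        (g := fun z : H => ‖z‖ ^ 2) hmom2 hmom2) hFc.aestronglyMeasurable ?_
      filter_upwards with p
      rw [Real.norm_eq_abs, abs_of_nonneg (sq_nonneg _)]
      exact hinner_sq_le p.1 p.2
    calc ∫ ω, (⟪y k ω, y l ω⟫ : ℝ) ^ 2 ∂P
        = ∫ p, (⟪p.1, p.2⟫ : ℝ) ^ 2 ∂(P.map (fun ω => (y k ω, y l ω))) := by
          rw [integral_map ((hy k).prodMk (hy l)).aemeasurable
            (by rw [hmap]; exact hFc.aestronglyMeasurable)]
      _ = ∫ p, (⟪p.1, p.2⟫ : ℝ) ^ 2 ∂(ν.prod ν) := by rw [hmap]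
      _ = ∫ z, (∫ x, (⟪z, x⟫ : ℝ) ^ 2 ∂ν) ∂ν := integral_prod _ hFint
      _ = ‖m‖ ^ 2 := hmnorm.symm
  have hinnerkl_int : ∀ k l : Fin N, Integrable (fun ω => (⟪y k ω, y l ω⟫ : ℝ) ^ 2) P := by
    intro k l
    have hmeas : AEStronglyMeasurable (fun ω => (⟪y k ω, y l ω⟫ : ℝ) ^ 2) P := by
      exact (((hy k).inner (hy l)).pow_const 2).aestronglyMeasurable
    refine Integrable.mono' (((hnormy4int k).add (hnormy4int l)).const_mul (1/2 : ℝ))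
      hmeas ?_
    filter_upwards with ω
    simp only [Pi.add_apply]
    rw [Real.norm_eq_abs, abs_of_nonneg (sq_nonneg _)]
    have h1 := hinner_sq_le (y k ω) (y l ω)
    nlinarith [sq_nonneg (‖y k ω‖ ^ 2 - ‖y l ω‖ ^ 2), norm_nonneg (y k ω), norm_nonneg (y l ω)]
  -- pointwise expansion of ‖Δ‖²
  have hpt : ∀ ω, ‖Δ ω‖ ^ 2 = ((N : ℝ)⁻¹) ^ 2 * (∑ k, ∑ l, (⟪y k ω, y l ω⟫ : ℝ) ^ 2)
      - 2 * ((N : ℝ)⁻¹ * ∑ k, hfun (y k ω)) + ‖m‖ ^ 2 := by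
    intro ω
    have hSS : (⟪S ω, S ω⟫ : ℝ) = ((N : ℝ)⁻¹) ^ 2 * ∑ k, ∑ l, (⟪y k ω, y l ω⟫ : ℝ) ^ 2 := by
      rw [hS]
      rw [real_inner_smul_left, real_inner_smul_right, sum_inner]
      rw [Finset.sum_congr rfl (fun k (_ : k ∈ Finset.univ) =>
        inner_sum Finset.univ (fun l => T (y l ω)) (T (y k ω)))]
      rw [Finset.sum_congr rfl (fun k (_ : k ∈ Finset.univ) =>
        Finset.sum_congr rfl (fun l (_ : l ∈ Finset.univ) => hT (y k ω) (y l ω)))]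
      ring
    have hSm : (⟪S ω, m⟫ : ℝ) = (N : ℝ)⁻¹ * ∑ k, hfun (y k ω) := by
      rw [hS, real_inner_smul_left, sum_inner]
      congr 1
      exact Finset.sum_congr rfl fun k _ => by rw [hfun_eq]
    have hexp : ‖Δ ω‖ ^ 2 = (⟪S ω, S ω⟫ : ℝ) - 2 * (⟪S ω, m⟫ : ℝ) + ‖m‖ ^ 2 := by
      rw [← real_inner_self_eq_norm_sq]
      show (⟪S ω - m, S ω - m⟫ : ℝ) = _
      rw [inner_sub_left, inner_sub_right, inner_sub_right]
      have hc : (⟪m, S ω⟫ : ℝ) = (⟪S ω, m⟫ : ℝ) := real_inner_comm _ _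
      rw [hc, real_inner_self_eq_norm_sq m]
      ring
    rw [hexp, hSS, hSm]
  -- the sum of cross moments
  have hsumkl : (∑ k : Fin N, ∑ l : Fin N, ∫ ω, (⟪y k ω, y l ω⟫ : ℝ) ^ 2 ∂P)
      = (N : ℝ) * (∫ z, ‖z‖ ^ 4 ∂ν) + ((N : ℝ) ^ 2 - N) * ‖m‖ ^ 2 := by
    have hrow : ∀ k : Fin N, (∑ l : Fin N, ∫ ω, (⟪y k ω, y l ω⟫ : ℝ) ^ 2 ∂P)
        = (∫ z, ‖z‖ ^ 4 ∂ν) + ((N : ℝ) - 1) * ‖m‖ ^ 2 := by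
      intro k
      have hterm : ∀ l : Fin N, ∫ ω, (⟪y k ω, y l ω⟫ : ℝ) ^ 2 ∂P
          = ‖m‖ ^ 2 + (if k = l then ((∫ z, ‖z‖ ^ 4 ∂ν) - ‖m‖ ^ 2) else 0) := by
        intro l
        by_cases h : k = l
        · subst h
          rw [if_pos rfl, hdiag k]; ring
        · rw [if_neg h, hcross k l h]; ring
      rw [Finset.sum_congr rfl fun l _ => hterm l]
      rw [Finset.sum_add_distrib, Finset.sum_const, Finset.sum_ite_eq]
      simp only [Finset.mem_univ, if_true, Finset.card_univ, Fintype.card_fin, nsmul_eq_mul]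
      ring
    rw [Finset.sum_congr rfl fun k _ => hrow k]
    rw [Finset.sum_const, Finset.card_univ, Fintype.card_fin, nsmul_eq_mul]
    ring
  -- the variance bound
  have hΔsq_eval : ∫ ω, ‖Δ ω‖ ^ 2 ∂P ≤ (∫ z, ‖z‖ ^ 4 ∂ν) / N := by
    have hint1 : Integrable (fun ω => ((N : ℝ)⁻¹) ^ 2
        * ∑ k, ∑ l, (⟪y k ω, y l ω⟫ : ℝ) ^ 2) P :=
      (integrable_finset_sum _ (fun k _ => integrable_finset_sum _
        (fun l _ => hinnerkl_int k l))).const_mul _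
    have hint2 : Integrable (fun ω => 2 * ((N : ℝ)⁻¹ * ∑ k, hfun (y k ω))) P :=
      ((integrable_finset_sum _ (fun k _ => hfun_int k)).const_mul _).const_mul 2
    have e : ∫ ω, ‖Δ ω‖ ^ 2 ∂P
        = ((N : ℝ)⁻¹) ^ 2 * (∑ k, ∑ l, ∫ ω, (⟪y k ω, y l ω⟫ : ℝ) ^ 2 ∂P)
          - 2 * ((N : ℝ)⁻¹ * ∑ k, ∫ ω, hfun (y k ω) ∂P) + ‖m‖ ^ 2 := by
      rw [show (fun ω => ‖Δ ω‖ ^ 2) = fun ω => (((N : ℝ)⁻¹) ^ 2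
          * (∑ k, ∑ l, (⟪y k ω, y l ω⟫ : ℝ) ^ 2)
          - 2 * ((N : ℝ)⁻¹ * ∑ k, hfun (y k ω)) + ‖m‖ ^ 2) from funext hpt]
      have hint12 : Integrable (fun ω => ((N : ℝ)⁻¹) ^ 2
          * (∑ k, ∑ l, (⟪y k ω, y l ω⟫ : ℝ) ^ 2)
          - 2 * ((N : ℝ)⁻¹ * ∑ k, hfun (y k ω))) P := hint1.sub hint2
      rw [integral_add hint12 (integrable_const _), integral_const]
      rw [integral_sub hint1 hint2]
      rw [integral_const_mul, integral_const_mul]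
      rw [integral_finset_sum _ (fun k _ => integrable_finset_sum _
        (fun l _ => hinnerkl_int k l))]
      rw [Finset.sum_congr rfl (fun k (_ : k ∈ Finset.univ) =>
        integral_finset_sum _ (fun l _ => hinnerkl_int k l))]
      rw [integral_const_mul, integral_finset_sum _ (fun k _ => hfun_int k)]
      simp [measure_univ]
    have hsumhfun : (∑ k : Fin N, ∫ ω, hfun (y k ω) ∂P) = (N : ℝ) * ‖m‖ ^ 2 := by
      rw [Finset.sum_congr rfl fun k _ => hfun_eval k]
      rw [Finset.sum_const, Finset.card_univ, Fintype.card_fin, nsmul_eq_mul]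
    rw [e, hsumkl, hsumhfun]
    have hNne : (N : ℝ) ≠ 0 := ne_of_gt hNpos
    have heq : ((N : ℝ)⁻¹) ^ 2 * ((N : ℝ) * (∫ z, ‖z‖ ^ 4 ∂ν)
        + ((N : ℝ) ^ 2 - N) * ‖m‖ ^ 2)
        - 2 * ((N : ℝ)⁻¹ * ((N : ℝ) * ‖m‖ ^ 2)) + ‖m‖ ^ 2
        = (∫ z, ‖z‖ ^ 4 ∂ν) / N - ‖m‖ ^ 2 / N := by
      field_simp
      ring
    rw [heq]
    have h0 : 0 ≤ ‖m‖ ^ 2 / N := by positivity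
    linarith
  -- expectation of ‖Δ‖
  have hEΔ : ∫ ω, ‖Δ ω‖ ∂P ≤ Real.sqrt ((∫ z, ‖z‖ ^ 4 ∂ν) / N) := by
    have hml2 : MemLp (fun ω => ‖Δ ω‖) 2 P :=
      (memLp_two_iff_integrable_sq hΔsm.norm.aestronglyMeasurable).mpr hΔsqint
    have hv := ProbabilityTheory.variance_nonneg (fun ω => ‖Δ ω‖) P
    rw [ProbabilityTheory.variance_eq_sub hml2] at hv
    have h2 : ∫ ω, ((fun ω => ‖Δ ω‖) ^ 2) ω ∂P = ∫ ω, ‖Δ ω‖ ^ 2 ∂P := by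
      refine integral_congr_ae (Filter.Eventually.of_forall fun ω => ?_)
      simp [Pi.pow_apply]
    rw [h2] at hv
    have hsq : (∫ ω, ‖Δ ω‖ ∂P) ^ 2 ≤ (∫ z, ‖z‖ ^ 4 ∂ν) / N := by
      nlinarith [hΔsq_eval]
    have h0 : 0 ≤ ∫ ω, ‖Δ ω‖ ∂P := integral_nonneg fun ω => norm_nonneg _
    have hM4 : (0:ℝ) ≤ (∫ z, ‖z‖ ^ 4 ∂ν) / N :=
      div_nonneg (integral_nonneg fun z => by positivity) (le_of_lt hNpos)
    exact (Real.le_sqrt h0 hM4).mpr hsq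
  -- assemble
  have hintsum : Integrable (fun ω => ∑ j : Fin d,
      (N : ℝ)⁻¹ * ∑ k, (⟪φ j, y k ω⟫ : ℝ) ^ 2) P :=
    integrable_finset_sum _ (fun j _ =>
      (integrable_finset_sum _ (fun k _ => hinnery2int (φ j) k)).const_mul _)
  refine ⟨fun ω => (∫ z, ‖z‖ ^ 2 ∂ν)
      - (∑ j : Fin d, (N : ℝ)⁻¹ * ∑ k, (⟪φ j, y k ω⟫ : ℝ) ^ 2)
      + Real.sqrt d * ‖Δ ω‖, ?_, key, ?_⟩
  · exact ((integrable_const _).sub hintsum).add (hΔnint.const_mul _)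
  · have hint12 : Integrable (fun ω => (∫ z, ‖z‖ ^ 2 ∂ν)
        - (∑ j : Fin d, (N : ℝ)⁻¹ * ∑ k, (⟪φ j, y k ω⟫ : ℝ) ^ 2)) P :=
      (integrable_const _).sub hintsum
    rw [integral_add hint12 (hΔnint.const_mul _)]
    rw [integral_sub (integrable_const _) hintsum, integral_const]
    rw [integral_const_mul]
    have hempφ : ∫ ω, (∑ j : Fin d, (N : ℝ)⁻¹ * ∑ k, (⟪φ j, y k ω⟫ : ℝ) ^ 2) ∂P
        = ∑ j : Fin d, ∫ z, (⟪φ j, z⟫ : ℝ) ^ 2 ∂ν := by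
      rw [integral_finset_sum _ (fun j _ =>
        (integrable_finset_sum _ (fun k _ => hinnery2int (φ j) k)).const_mul _)]
      refine Finset.sum_congr rfl fun j _ => ?_
      rw [integral_const_mul, integral_finset_sum _ (fun k _ => hinnery2int (φ j) k)]
      rw [Finset.sum_congr rfl (fun k (_ : k ∈ Finset.univ) => hlaweval k
        (f := fun z => (⟪φ j, z⟫ : ℝ) ^ 2)
        (((continuous_const.inner continuous_id).pow 2)).aestronglyMeasurable)]
      rw [Finset.sum_const, Finset.card_univ, Fintype.card_fin, nsmul_eq_mul]
      field_simp
    rw [hempφ]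
    simp only [measure_univ, ENNReal.toReal_one, smul_eq_mul, one_mul, probReal_univ]
    have h1 : Real.sqrt d * ∫ ω, ‖Δ ω‖ ∂P
        ≤ Real.sqrt ((∫ z, ‖z‖ ^ 4 ∂ν) * d / N) := by
      have h2 : Real.sqrt d * ∫ ω, ‖Δ ω‖ ∂P
          ≤ Real.sqrt d * Real.sqrt ((∫ z, ‖z‖ ^ 4 ∂ν) / N) :=
        mul_le_mul_of_nonneg_left hEΔ (Real.sqrt_nonneg _)
      have h3 : Real.sqrt d * Real.sqrt ((∫ z, ‖z‖ ^ 4 ∂ν) / N)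
          = Real.sqrt ((∫ z, ‖z‖ ^ 4 ∂ν) * d / N) := by
        rw [← Real.sqrt_mul (by positivity : (0:ℝ) ≤ (d : ℝ))]
        congr 1
        ring
      linarith
    linarith


/-- Error bound for the PCA-based approximation `Ψ_PCA` of a globally Lipschitz
map `Ψ : X → Y`: with `V^X_{d_X,N}(ω)`, `V^Y_{d_Y,N}(ω)` the empirical PCA
subspaces (spanned by orthonormal families `ψX`, `ψY` maximizing the empirical
variance among all orthonormal families of the same size) built from `N` i.i.d.
samples `x_k ∼ μ` and their images `Ψ(x_k)`, and with
`Ψ_PCA(x) = Π_{V^Y_{d_Y,N}} Ψ(Π_{V^X_{d_X,N}} x)`, there is a constant `Q ≥ 0`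
depending only on `μ` and `Ψ_♯μ` such that
`E_samples E_{x∼μ} ‖Ψ_PCA(x) − Ψ(x)‖² ≤ 2L²(√(Q d_X/N) + R^μ(V^X_{d_X}))
  + 2(√(Q d_Y/N) + R^{Ψ_♯μ}(V^Y_{d_Y}))`,
where `V^X_{d_X}`, `V^Y_{d_Y}` are the optimal population PCA subspaces, spanned
by the orthonormal families `φX`, `φY` maximizing the population variance. -/
theorem psi_pca_error_bound
    {X Y : Type*}
    [NormedAddCommGroup X] [InnerProductSpace ℝ X] [CompleteSpace X]
    [TopologicalSpace.SeparableSpace X] [MeasurableSpace X] [BorelSpace X]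
    [NormedAddCommGroup Y] [InnerProductSpace ℝ Y] [CompleteSpace Y]
    [TopologicalSpace.SeparableSpace Y] [MeasurableSpace Y] [BorelSpace Y]
    (μ : Measure X) [IsProbabilityMeasure μ]
    (hmom4 : Integrable (fun x : X => ‖x‖ ^ 4) μ)
    (Ψ : X → Y) (hΨmeas : Measurable Ψ)
    (L : ℝ) (hL : 0 ≤ L) (hΨ : ∀ x z : X, ‖Ψ x - Ψ z‖ ≤ L * ‖x - z‖)
    -- population PCA bases: orthonormal families maximizing the population variance
    (φX : ℕ → X) (hφX : Orthonormal ℝ φX)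
    (hφXopt : ∀ (d : ℕ) (χ : Fin d → X), Orthonormal ℝ χ →
      (∑ j : Fin d, ∫ x, ⟪χ j, x⟫ ^ 2 ∂μ)
        ≤ ∑ j ∈ Finset.range d, ∫ x, ⟪φX j, x⟫ ^ 2 ∂μ)
    (φY : ℕ → Y) (hφY : Orthonormal ℝ φY)
    (hφYopt : ∀ (d : ℕ) (χ : Fin d → Y), Orthonormal ℝ χ →
      (∑ j : Fin d, ∫ x, ⟪χ j, Ψ x⟫ ^ 2 ∂μ)
        ≤ ∑ j ∈ Finset.range d, ∫ x, ⟪φY j, Ψ x⟫ ^ 2 ∂μ) :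
    ∃ Q : ℝ, 0 ≤ Q ∧
      ∀ (dX dY N : ℕ), 1 ≤ dX → 1 ≤ dY → dX ≤ N → dY ≤ N →
      ∀ (Ω : Type) (_ : MeasurableSpace Ω) (P : Measure Ω), IsProbabilityMeasure P →
      ∀ (x : Fin N → Ω → X), (∀ k, Measurable (x k)) →
        ProbabilityTheory.iIndepFun x P →
        (∀ k, P.map (x k) = μ) →
      -- empirical PCA bases for the inputs and the outputs
      ∀ (ψX : Fin dX → Ω → X), (∀ ω, Orthonormal ℝ (fun j => ψX j ω)) →
        (∀ ω (χ : Fin dX → X), Orthonormal ℝ χ →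
          (∑ j : Fin dX, (N : ℝ)⁻¹ * ∑ k, ⟪χ j, x k ω⟫ ^ 2)
            ≤ ∑ j : Fin dX, (N : ℝ)⁻¹ * ∑ k, ⟪ψX j ω, x k ω⟫ ^ 2) →
      ∀ (ψY : Fin dY → Ω → Y), (∀ ω, Orthonormal ℝ (fun j => ψY j ω)) →
        (∀ ω (χ : Fin dY → Y), Orthonormal ℝ χ →
          (∑ j : Fin dY, (N : ℝ)⁻¹ * ∑ k, ⟪χ j, Ψ (x k ω)⟫ ^ 2)
            ≤ ∑ j : Fin dY, (N : ℝ)⁻¹ * ∑ k, ⟪ψY j ω, Ψ (x k ω)⟫ ^ 2) →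
      (∫ ω, ∫ v, ‖(∑ j : Fin dY,
            ⟪ψY j ω, Ψ (∑ i : Fin dX, ⟪ψX i ω, v⟫ • ψX i ω)⟫ • ψY j ω)
            - Ψ v‖ ^ 2 ∂μ ∂P)
        ≤ 2 * L ^ 2 * (Real.sqrt (Q * dX / N)
              + ∫ v, ‖v - ∑ j ∈ Finset.range dX, ⟪φX j, v⟫ • φX j‖ ^ 2 ∂μ)
          + 2 * (Real.sqrt (Q * dY / N)
              + ∫ v, ‖Ψ v - ∑ j ∈ Finset.range dY, ⟪φY j, Ψ v⟫ • φY j‖ ^ 2 ∂μ) := by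
  classical
  haveI : SecondCountableTopology X := UniformSpace.secondCountable_of_separable X
  haveI : SecondCountableTopology Y := UniformSpace.secondCountable_of_separable Y
  set ν : Measure Y := μ.map Ψ with hν
  haveI : IsProbabilityMeasure ν := Measure.isProbabilityMeasure_map hΨmeas.aemeasurable
  -- Lipschitz growth bound
  have hgrow : ∀ v : X, ‖Ψ v‖ ≤ L * ‖v‖ + ‖Ψ 0‖ := by
    intro v
    have h1 := hΨ v 0
    have h2 := norm_sub_norm_le (Ψ v) (Ψ 0)
    rw [sub_zero] at h1
    linarith
  -- fourth moment of Ψ under μ / of ν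
  have hmom4Ψ : Integrable (fun v : X => ‖Ψ v‖ ^ 4) μ := by
    refine Integrable.mono' ((hmom4.const_mul (8 * L ^ 4)).add
      (integrable_const (8 * ‖Ψ 0‖ ^ 4)))
      ((hΨmeas.norm.pow_const 4).aestronglyMeasurable) ?_
    filter_upwards with v
    simp only [Pi.add_apply]
    rw [Real.norm_eq_abs, abs_of_nonneg (by positivity)]
    have h1 := hgrow v
    have h2 : (0:ℝ) ≤ L * ‖v‖ := mul_nonneg hL (norm_nonneg v)
    have e1 : ‖Ψ v‖ ^ 2 ≤ (L * ‖v‖ + ‖Ψ 0‖) ^ 2 := by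
      nlinarith [norm_nonneg (Ψ v), norm_nonneg (Ψ 0)]
    have e2 : (L * ‖v‖ + ‖Ψ 0‖) ^ 2 ≤ 2 * (L * ‖v‖) ^ 2 + 2 * ‖Ψ 0‖ ^ 2 := by
      nlinarith [sq_nonneg (L * ‖v‖ - ‖Ψ 0‖)]
    have e3 : ‖Ψ v‖ ^ 2 ≤ 2 * (L * ‖v‖) ^ 2 + 2 * ‖Ψ 0‖ ^ 2 := le_trans e1 e2
    have e4 : (‖Ψ v‖ ^ 2) ^ 2 ≤ (2 * (L * ‖v‖) ^ 2 + 2 * ‖Ψ 0‖ ^ 2) ^ 2 :=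
      pow_le_pow_left₀ (sq_nonneg _) e3 2
    nlinarith [e4, sq_nonneg ((L * ‖v‖) ^ 2 - ‖Ψ 0‖ ^ 2)]
  have hmom4Y : Integrable (fun w : Y => ‖w‖ ^ 4) ν := by
    rw [hν, integrable_map_measure (g := fun w : Y => ‖w‖ ^ 4) (continuous_norm.pow 4).aestronglyMeasurable
      hΨmeas.aemeasurable]
    exact hmom4Ψ
  -- second moments
  have hmom2X : Integrable (fun v : X => ‖v‖ ^ 2) μ := by
    refine Integrable.mono' (hmom4.add (integrable_const 1))
      (continuous_norm.pow 2).aestronglyMeasurable ?_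
    filter_upwards with v
    simp only [Pi.add_apply]
    rw [Real.norm_eq_abs, abs_of_nonneg (by positivity)]
    nlinarith [sq_nonneg (‖v‖ ^ 2 - 1), norm_nonneg v]
  have hmom2Ψ : Integrable (fun v : X => ‖Ψ v‖ ^ 2) μ := by
    refine Integrable.mono' (hmom4Ψ.add (integrable_const 1))
      ((hΨmeas.norm.pow_const 2).aestronglyMeasurable) ?_
    filter_upwards with v
    simp only [Pi.add_apply]
    rw [Real.norm_eq_abs, abs_of_nonneg (by positivity)]
    nlinarith [sq_nonneg (‖Ψ v‖ ^ 2 - 1), norm_nonneg (Ψ v)]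
  have hinner2X : ∀ c : X, Integrable (fun v : X => (⟪c, v⟫ : ℝ) ^ 2) μ := by
    intro c
    refine Integrable.mono' (hmom2X.const_mul (‖c‖ ^ 2))
      (((continuous_const.inner continuous_id).pow 2).aestronglyMeasurable) ?_
    filter_upwards with v
    rw [Real.norm_eq_abs, abs_of_nonneg (sq_nonneg _)]
    exact inner_sq_le_aux c v
  have hinner2Ψ : ∀ c : Y, Integrable (fun v : X => (⟪c, Ψ v⟫ : ℝ) ^ 2) μ := by
    intro c
    refine Integrable.mono' (hmom2Ψ.const_mul (‖c‖ ^ 2))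
      (((measurable_const.inner hΨmeas).pow_const 2).aestronglyMeasurable) ?_
    filter_upwards with v
    rw [Real.norm_eq_abs, abs_of_nonneg (sq_nonneg _)]
    exact inner_sq_le_aux c (Ψ v)
  -- transfers between ν and μ
  have hmapint : ∀ {f : Y → ℝ}, AEStronglyMeasurable f ν →
      (∫ w, f w ∂ν) = ∫ v, f (Ψ v) ∂μ := by
    intro f hfm
    rw [hν]
    exact integral_map hΨmeas.aemeasurable (by rwa [← hν])
  -- the constant
  refine ⟨max (∫ v, ‖v‖ ^ 4 ∂μ) (∫ w, ‖w‖ ^ 4 ∂ν),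
    le_trans (integral_nonneg fun v => by positivity) (le_max_left _ _), ?_⟩
  intro dX dY N hdX hdY hdXN hdYN Ω mΩ P hP x hx hindep hlaw ψX hψXon hψXopt ψY hψYon hψYopt
  haveI := hP
  have hNX : 1 ≤ N := le_trans hdX hdXN
  have hNpos : (0:ℝ) < N := by exact_mod_cast hNX
  -- apply the generic PCA lemma on the input side
  obtain ⟨HX, hHXint, hHXpt, hHXbound⟩ := pca_gen μ hmom4 hNX (fun j : Fin dX => φX j)
    (hφX.comp _ Fin.val_injective) P x hx hlaw (fun k l hkl => hindep.indepFun hkl)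
    ψX hψXon (fun ω => hψXopt ω _ (hφX.comp _ Fin.val_injective))
  -- apply it on the output side
  have hlawY : ∀ k, P.map (fun ω => Ψ (x k ω)) = ν := by
    intro k
    rw [hν, ← hlaw k]
    exact (Measure.map_map hΨmeas (hx k)).symm
  obtain ⟨HY, hHYint, hHYpt, hHYbound⟩ := pca_gen ν hmom4Y hNX (fun j : Fin dY => φY j)
    (hφY.comp _ Fin.val_injective) P (fun k ω => Ψ (x k ω))
    (fun k => hΨmeas.comp (hx k)) hlawY
    (fun k l hkl => (hindep.indepFun hkl).comp hΨmeas hΨmeas)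
    ψY hψYon (fun ω => hψYopt ω _ (hφY.comp _ Fin.val_injective))
  -- pointwise splitting bound
  have pointwise : ∀ ω v, ‖(∑ j : Fin dY,
        ⟪ψY j ω, Ψ (∑ i : Fin dX, ⟪ψX i ω, v⟫ • ψX i ω)⟫ • ψY j ω) - Ψ v‖ ^ 2
      ≤ 2 * L ^ 2 * ‖v - ∑ i : Fin dX, ⟪ψX i ω, v⟫ • ψX i ω‖ ^ 2
        + 2 * ‖Ψ v - ∑ j : Fin dY, ⟪ψY j ω, Ψ v⟫ • ψY j ω‖ ^ 2 := by
    intro ω v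
    set Pv : X := ∑ i : Fin dX, ⟪ψX i ω, v⟫ • ψX i ω with hPv
    set A : Y := ∑ j : Fin dY, ⟪ψY j ω, Ψ Pv⟫ • ψY j ω with hA
    set B : Y := ∑ j : Fin dY, ⟪ψY j ω, Ψ v⟫ • ψY j ω with hB
    have htri : ‖A - Ψ v‖ ≤ ‖A - B‖ + ‖B - Ψ v‖ := by
      have := dist_triangle A B (Ψ v)
      simpa [dist_eq_norm] using this
    have hAB : A - B = ∑ j : Fin dY, (⟪ψY j ω, Ψ Pv - Ψ v⟫ : ℝ) • ψY j ω := by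
      rw [hA, hB, ← Finset.sum_sub_distrib]
      refine Finset.sum_congr rfl fun j _ => ?_
      rw [inner_sub_right, sub_smul]
    have hABle : ‖A - B‖ ≤ ‖Ψ Pv - Ψ v‖ := by
      rw [hAB]
      exact proj_norm_le Finset.univ (fun j => ψY j ω) (hψYon ω) _
    have hLip : ‖Ψ Pv - Ψ v‖ ≤ L * ‖v - Pv‖ := by
      have h := hΨ Pv v
      rwa [norm_sub_rev Pv v] at h
    have hABle2 : ‖A - B‖ ≤ L * ‖v - Pv‖ := le_trans hABle hLip
    have hBΨ : ‖B - Ψ v‖ = ‖Ψ v - B‖ := norm_sub_rev _ _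
    nlinarith [norm_nonneg (A - Ψ v), norm_nonneg (A - B), norm_nonneg (B - Ψ v),
      sq_nonneg (L * ‖v - Pv‖ - ‖B - Ψ v‖), mul_nonneg hL (norm_nonneg (v - Pv)),
      htri, hABle2]
  -- identities for the residuals
  have hresX : ∀ ω, (fun v : X => ‖v - ∑ i : Fin dX, ⟪ψX i ω, v⟫ • ψX i ω‖ ^ 2)
      = fun v => ‖v‖ ^ 2 - ∑ i : Fin dX, (⟪ψX i ω, v⟫ : ℝ) ^ 2 := by
    intro ω
    funext v
    exact proj_identity Finset.univ (fun i => ψX i ω) (hψXon ω) v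
  have hresY : ∀ ω, (fun v : X => ‖Ψ v - ∑ j : Fin dY, ⟪ψY j ω, Ψ v⟫ • ψY j ω‖ ^ 2)
      = fun v => ‖Ψ v‖ ^ 2 - ∑ j : Fin dY, (⟪ψY j ω, Ψ v⟫ : ℝ) ^ 2 := by
    intro ω
    funext v
    exact proj_identity Finset.univ (fun j => ψY j ω) (hψYon ω) (Ψ v)
  -- inner integral bound
  have hinnerint : ∀ ω, (∫ v, ‖(∑ j : Fin dY,
        ⟪ψY j ω, Ψ (∑ i : Fin dX, ⟪ψX i ω, v⟫ • ψX i ω)⟫ • ψY j ω) - Ψ v‖ ^ 2 ∂μ)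
      ≤ 2 * L ^ 2 * HX ω + 2 * HY ω := by
    intro ω
    have hgint1 : Integrable (fun v : X =>
        ‖v - ∑ i : Fin dX, ⟪ψX i ω, v⟫ • ψX i ω‖ ^ 2) μ := by
      rw [hresX ω]
      exact hmom2X.sub (integrable_finset_sum _ fun i _ => hinner2X _)
    have hgint2 : Integrable (fun v : X =>
        ‖Ψ v - ∑ j : Fin dY, ⟪ψY j ω, Ψ v⟫ • ψY j ω‖ ^ 2) μ := by
      rw [hresY ω]
      exact hmom2Ψ.sub (integrable_finset_sum _ fun j _ => hinner2Ψ _)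
    have hg : Integrable (fun v : X =>
        2 * L ^ 2 * ‖v - ∑ i : Fin dX, ⟪ψX i ω, v⟫ • ψX i ω‖ ^ 2
        + 2 * ‖Ψ v - ∑ j : Fin dY, ⟪ψY j ω, Ψ v⟫ • ψY j ω‖ ^ 2) μ :=
      (hgint1.const_mul _).add (hgint2.const_mul _)
    have hmono := integral_mono_of_nonneg
      (f := fun v => ‖(∑ j : Fin dY,
        ⟪ψY j ω, Ψ (∑ i : Fin dX, ⟪ψX i ω, v⟫ • ψX i ω)⟫ • ψY j ω) - Ψ v‖ ^ 2)
      (μ := μ) (Filter.Eventually.of_forall fun v => sq_nonneg _) hg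
      (Filter.Eventually.of_forall (pointwise ω))
    have heval : (∫ v, (2 * L ^ 2 * ‖v - ∑ i : Fin dX, ⟪ψX i ω, v⟫ • ψX i ω‖ ^ 2
        + 2 * ‖Ψ v - ∑ j : Fin dY, ⟪ψY j ω, Ψ v⟫ • ψY j ω‖ ^ 2) ∂μ)
        ≤ 2 * L ^ 2 * HX ω + 2 * HY ω := by
      rw [integral_add (hgint1.const_mul _) (hgint2.const_mul _),
        integral_const_mul, integral_const_mul]
      have hv1 : (∫ v, ‖v - ∑ i : Fin dX, ⟪ψX i ω, v⟫ • ψX i ω‖ ^ 2 ∂μ) ≤ HX ω := by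
        rw [hresX ω]
        rw [integral_sub hmom2X (integrable_finset_sum _ fun i _ => hinner2X _),
          integral_finset_sum _ fun i _ => hinner2X _]
        exact hHXpt ω
      have hv2 : (∫ v, ‖Ψ v - ∑ j : Fin dY, ⟪ψY j ω, Ψ v⟫ • ψY j ω‖ ^ 2 ∂μ) ≤ HY ω := by
        rw [hresY ω]
        rw [integral_sub hmom2Ψ (integrable_finset_sum _ fun j _ => hinner2Ψ _),
          integral_finset_sum _ fun j _ => hinner2Ψ _]
        have hpt := hHYpt ω
        have hc1 : (∫ z, ‖z‖ ^ 2 ∂ν) = ∫ v, ‖Ψ v‖ ^ 2 ∂μ :=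
          hmapint (continuous_norm.pow 2).aestronglyMeasurable
        have hc2 : ∀ j : Fin dY, (∫ z, (⟪ψY j ω, z⟫ : ℝ) ^ 2 ∂ν)
            = ∫ v, (⟪ψY j ω, Ψ v⟫ : ℝ) ^ 2 ∂μ := fun j =>
          hmapint ((continuous_const.inner continuous_id).pow 2).aestronglyMeasurable
        rw [hc1, Finset.sum_congr rfl fun j _ => hc2 j] at hpt
        exact hpt
      have h2L : (0:ℝ) ≤ 2 * L ^ 2 := by positivity
      nlinarith [mul_le_mul_of_nonneg_left hv1 h2L, hv2]
    exact le_trans hmono heval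
  -- outer integral
  have houter := integral_mono_of_nonneg
    (f := fun ω => ∫ v, ‖(∑ j : Fin dY,
      ⟪ψY j ω, Ψ (∑ i : Fin dX, ⟪ψX i ω, v⟫ • ψX i ω)⟫ • ψY j ω) - Ψ v‖ ^ 2 ∂μ)
    (μ := P)
    (g := fun ω => 2 * L ^ 2 * HX ω + 2 * HY ω)
    (Filter.Eventually.of_forall fun ω => integral_nonneg fun v => sq_nonneg _)
    (by exact (hHXint.const_mul (2 * L ^ 2)).add (hHYint.const_mul 2))
    (Filter.Eventually.of_forall hinnerint)
  have hsplit : ∫ ω, (2 * L ^ 2 * HX ω + 2 * HY ω) ∂P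
      = 2 * L ^ 2 * (∫ ω, HX ω ∂P) + 2 * (∫ ω, HY ω ∂P) := by
    rw [integral_add (hHXint.const_mul (2 * L ^ 2)) (hHYint.const_mul 2),
      integral_const_mul, integral_const_mul]
  rw [hsplit] at houter
  -- residual identities for the population subspaces
  have hRX : ∫ v, ‖v - ∑ j ∈ Finset.range dX, ⟪φX j, v⟫ • φX j‖ ^ 2 ∂μ
      = (∫ v, ‖v‖ ^ 2 ∂μ) - ∑ j ∈ Finset.range dX, ∫ v, (⟪φX j, v⟫ : ℝ) ^ 2 ∂μ := by
    rw [show (fun v : X => ‖v - ∑ j ∈ Finset.range dX, ⟪φX j, v⟫ • φX j‖ ^ 2)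
        = fun v => ‖v‖ ^ 2 - ∑ j ∈ Finset.range dX, (⟪φX j, v⟫ : ℝ) ^ 2 from
      funext fun v => proj_identity _ φX hφX v]
    rw [integral_sub hmom2X (integrable_finset_sum _ fun j _ => hinner2X _),
      integral_finset_sum _ fun j _ => hinner2X _]
  have hRY : ∫ v, ‖Ψ v - ∑ j ∈ Finset.range dY, ⟪φY j, Ψ v⟫ • φY j‖ ^ 2 ∂μ
      = (∫ v, ‖Ψ v‖ ^ 2 ∂μ) - ∑ j ∈ Finset.range dY, ∫ v, (⟪φY j, Ψ v⟫ : ℝ) ^ 2 ∂μ := by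
    rw [show (fun v : X => ‖Ψ v - ∑ j ∈ Finset.range dY, ⟪φY j, Ψ v⟫ • φY j‖ ^ 2)
        = fun v => ‖Ψ v‖ ^ 2 - ∑ j ∈ Finset.range dY, (⟪φY j, Ψ v⟫ : ℝ) ^ 2 from
      funext fun v => proj_identity _ φY hφY (Ψ v)]
    rw [integral_sub hmom2Ψ (integrable_finset_sum _ fun j _ => hinner2Ψ _),
      integral_finset_sum _ fun j _ => hinner2Ψ _]
  -- rewrite the pca_gen bounds
  have hXfin : (∑ j : Fin dX, ∫ v, (⟪φX (j : ℕ), v⟫ : ℝ) ^ 2 ∂μ)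
      = ∑ j ∈ Finset.range dX, ∫ v, (⟪φX j, v⟫ : ℝ) ^ 2 ∂μ :=
    Fin.sum_univ_eq_sum_range (fun j => ∫ v, (⟪φX j, v⟫ : ℝ) ^ 2 ∂μ) dX
  have hYfin : (∑ j : Fin dY, ∫ w, (⟪φY (j : ℕ), w⟫ : ℝ) ^ 2 ∂ν)
      = ∑ j ∈ Finset.range dY, ∫ v, (⟪φY j, Ψ v⟫ : ℝ) ^ 2 ∂μ := by
    rw [Fin.sum_univ_eq_sum_range (fun j => ∫ w, (⟪φY j, w⟫ : ℝ) ^ 2 ∂ν) dY]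
    exact Finset.sum_congr rfl fun j _ =>
      hmapint ((continuous_const.inner continuous_id).pow 2).aestronglyMeasurable
  have hc1 : (∫ z, ‖z‖ ^ 2 ∂ν) = ∫ v, ‖Ψ v‖ ^ 2 ∂μ :=
    hmapint (continuous_norm.pow 2).aestronglyMeasurable
  rw [hXfin] at hHXbound
  rw [hYfin, hc1] at hHYbound
  -- monotonicity of sqrt in Q
  have hsqX : Real.sqrt ((∫ v, ‖v‖ ^ 4 ∂μ) * dX / N)
      ≤ Real.sqrt (max (∫ v, ‖v‖ ^ 4 ∂μ) (∫ w, ‖w‖ ^ 4 ∂ν) * dX / N) := by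
    apply Real.sqrt_le_sqrt
    gcongr
    exact le_max_left _ _
  have hsqY : Real.sqrt ((∫ w, ‖w‖ ^ 4 ∂ν) * dY / N)
      ≤ Real.sqrt (max (∫ v, ‖v‖ ^ 4 ∂μ) (∫ w, ‖w‖ ^ 4 ∂ν) * dY / N) := by
    apply Real.sqrt_le_sqrt
    gcongr
    exact le_max_right _ _
  have h2L : (0:ℝ) ≤ 2 * L ^ 2 := by positivity
  have hfinX := mul_le_mul_of_nonneg_left (le_trans hHXbound
    (by linarith [hsqX] : (Real.sqrt ((∫ v, ‖v‖ ^ 4 ∂μ) * dX / N)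
      + ((∫ v, ‖v‖ ^ 2 ∂μ) - ∑ j ∈ Finset.range dX, ∫ v, (⟪φX j, v⟫ : ℝ) ^ 2 ∂μ))
      ≤ Real.sqrt (max (∫ v, ‖v‖ ^ 4 ∂μ) (∫ w, ‖w‖ ^ 4 ∂ν) * dX / N)
      + ((∫ v, ‖v‖ ^ 2 ∂μ) - ∑ j ∈ Finset.range dX, ∫ v, (⟪φX j, v⟫ : ℝ) ^ 2 ∂μ))) h2L
  have hfinY := mul_le_mul_of_nonneg_left (le_trans hHYbound
    (by linarith [hsqY] : (Real.sqrt ((∫ w, ‖w‖ ^ 4 ∂ν) * dY / N)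
      + ((∫ v, ‖Ψ v‖ ^ 2 ∂μ) - ∑ j ∈ Finset.range dY, ∫ v, (⟪φY j, Ψ v⟫ : ℝ) ^ 2 ∂μ))
      ≤ Real.sqrt (max (∫ v, ‖v‖ ^ 4 ∂μ) (∫ w, ‖w‖ ^ 4 ∂ν) * dY / N)
      + ((∫ v, ‖Ψ v‖ ^ 2 ∂μ) - ∑ j ∈ Finset.range dY, ∫ v, (⟪φY j, Ψ v⟫ : ℝ) ^ 2 ∂μ)))
    (by norm_num : (0:ℝ) ≤ 2)
  rw [hRX, hRY]
  linarith [houter, hfinX, hfinY]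
end

section
/- Let H be a separable Hilbert space, C : H → H compact, self-adjoint, non-negative with eigenvalues λ₁ ≥ λ₂ ≥ ... and orthonormal eigenvectors φ₁, φ₂, .... For any orthonormal family {u₁,...,u_d} in H, ∑_{j=1}^d (λ_j − ⟨C u_j, u_j⟩) ≥ ∑_{j=1}^d (λ_j − λ_d)(1 − ∑_{k=1}^d |⟨u_k, φ_j⟩|²) ≥ 0. -/
open scoped RealInnerProductSpace BigOperators

/-- Key inequality in the proof of Fan's theorem: for a compact, self-adjoint,
non-negative operator `C` with orthonormal eigenvectors `φ` (spanning a dense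
subspace) and decreasing eigenvalues `lam 0 ≥ lam 1 ≥ ...`, and for any
orthonormal family `u 1, ..., u d` (`d ≥ 1`),
`∑_{j<d} (λⱼ − ⟪C uⱼ, uⱼ⟫) ≥ ∑_{j<d} (λⱼ − λ_d)(1 − ∑_{k<d} ⟪u_k, φⱼ⟫²) ≥ 0`. -/
theorem fan_key_inequality
    {H : Type*} [NormedAddCommGroup H] [InnerProductSpace ℝ H] [CompleteSpace H]
    [TopologicalSpace.SeparableSpace H]
    (C : H →L[ℝ] H) (hCcompact : IsCompactOperator C)
    (hCsa : IsSelfAdjoint C) (hCnonneg : ∀ u : H, 0 ≤ ⟪C u, u⟫)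
    (lam : ℕ → ℝ) (φ : ℕ → H) (hφ : Orthonormal ℝ φ)
    (heig : ∀ j, C (φ j) = lam j • φ j) (hdec : Antitone lam)
    (hspan : (Submodule.span ℝ (Set.range φ)).topologicalClosure = ⊤)
    (d : ℕ) (hd : 1 ≤ d) (u : Fin d → H) (hu : Orthonormal ℝ u) :
    (∑ j ∈ Finset.range d, (lam j - lam (d - 1)) *
        (1 - ∑ k : Fin d, ⟪u k, φ j⟫ ^ 2))
      ≤ ∑ j : Fin d, (lam j - ⟪C (u j), u j⟫) ∧
    0 ≤ ∑ j ∈ Finset.range d, (lam j - lam (d - 1)) *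
        (1 - ∑ k : Fin d, ⟪u k, φ j⟫ ^ 2) := by
  classical
  set μ := lam (d - 1) with hμ
  have hlam_eq : ∀ j, lam j = ⟪C (φ j), φ j⟫ := by
    intro j
    rw [heig j, real_inner_smul_left, real_inner_self_eq_norm_sq, hφ.1 j]
    ring
  have hlam_nonneg : ∀ j, 0 ≤ lam j := fun j => (hlam_eq j) ▸ hCnonneg (φ j)
  let b : HilbertBasis ℕ ℝ H := HilbertBasis.mk hφ (hspan ▸ le_rfl)
  have hb : ⇑b = φ := HilbertBasis.coe_mk _ _
  have hadj : ContinuousLinearMap.adjoint C = C :=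
    ContinuousLinearMap.isSelfAdjoint_iff'.mp hCsa
  -- key pointwise bound
  have key : ∀ v : H, ‖v‖ = 1 →
      ⟪C v, v⟫ ≤ μ + ∑ k ∈ Finset.range d, (lam k - μ) * ⟪v, φ k⟫ ^ 2 := by
    intro v hv
    have hsq : Summable fun i => ⟪v, φ i⟫ ^ 2 := by
      have := hφ.inner_products_summable (x := v)
      simpa [Real.norm_eq_abs, sq_abs, real_inner_comm] using this
    have hCvv : ⟪C v, v⟫ = ∑' i, lam i * ⟪v, φ i⟫ ^ 2 := by
      have h := b.tsum_inner_mul_inner (C v) v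
      rw [← h]
      apply tsum_congr
      intro i
      have hsa : ⟪C v, b i⟫ = ⟪v, C (b i)⟫ := by
        conv_lhs => rw [← hadj]
        exact ContinuousLinearMap.adjoint_inner_left C (b i) v
      rw [hsa, hb, heig i, real_inner_smul_right, real_inner_comm (φ i) v]
      ring
    have hnorm : (1 : ℝ) = ∑' i, ⟪v, φ i⟫ ^ 2 := by
      have h := b.tsum_inner_mul_inner v v
      rw [real_inner_self_eq_norm_sq, hv, one_pow] at h
      rw [← h]
      apply tsum_congr
      intro i
      rw [hb, sq, real_inner_comm (φ i) v]
    have hsum1 : Summable fun i => lam i * ⟪v, φ i⟫ ^ 2 := by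
      apply Summable.of_nonneg_of_le
        (fun i => mul_nonneg (hlam_nonneg i) (sq_nonneg _))
        (fun i => mul_le_mul_of_nonneg_right (hdec (Nat.zero_le i)) (sq_nonneg _))
        (hsq.mul_left (lam 0))
    have hsum2 : Summable fun i => (lam i - μ) * ⟪v, φ i⟫ ^ 2 := by
      have heq : (fun i => (lam i - μ) * ⟪v, φ i⟫ ^ 2)
          = fun i => lam i * ⟪v, φ i⟫ ^ 2 - μ * ⟪v, φ i⟫ ^ 2 := by
        funext i; ring
      rw [heq]
      exact hsum1.sub (hsq.mul_left μ)
    have hsplit : ∑' i, (lam i - μ) * ⟪v, φ i⟫ ^ 2 = ⟪C v, v⟫ - μ := by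
      calc ∑' i, (lam i - μ) * ⟪v, φ i⟫ ^ 2
          = ∑' i, (lam i * ⟪v, φ i⟫ ^ 2 - μ * ⟪v, φ i⟫ ^ 2) :=
            tsum_congr fun i => by ring
        _ = (∑' i, lam i * ⟪v, φ i⟫ ^ 2) - ∑' i, μ * ⟪v, φ i⟫ ^ 2 :=
            Summable.tsum_sub hsum1 (hsq.mul_left μ)
        _ = ⟪C v, v⟫ - μ := by rw [← hCvv, tsum_mul_left, ← hnorm, mul_one]
    have hcompl := Summable.sum_add_tsum_compl (s := Finset.range d) hsum2
    have h0 : ∑' (x : ↑(↑(Finset.range d) : Set ℕ)ᶜ),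
        (lam (x : ℕ) - μ) * ⟪v, φ (x : ℕ)⟫ ^ 2 ≤ 0 := by
      apply tsum_nonpos
      rintro ⟨i, hi⟩
      simp only [Set.mem_compl_iff, Finset.coe_range, Set.mem_Iio, not_lt] at hi
      have : lam i ≤ μ := hdec (by omega)
      exact mul_nonpos_of_nonpos_of_nonneg (by linarith) (sq_nonneg _)
    linarith
  -- Bessel bound
  have bessel : ∀ j : ℕ, ∑ k : Fin d, ⟪u k, φ j⟫ ^ 2 ≤ 1 := by
    intro j
    have h := hu.sum_inner_products_le (x := φ j) (s := Finset.univ)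
    rw [hφ.1 j, one_pow] at h
    simpa [Real.norm_eq_abs, sq_abs] using h
  have hle : ∀ j : ℕ, j < d → μ ≤ lam j := fun j hj => hdec (by omega)
  constructor
  · have step : ∑ j : Fin d,
        (lam j - (μ + ∑ k ∈ Finset.range d, (lam k - μ) * ⟪u j, φ k⟫ ^ 2))
        ≤ ∑ j : Fin d, (lam j - ⟪C (u j), u j⟫) := by
      apply Finset.sum_le_sum
      intro j _
      have := key (u j) (hu.1 j)
      linarith
    refine le_trans (le_of_eq ?_) step
    calc ∑ j ∈ Finset.range d, (lam j - μ) * (1 - ∑ k : Fin d, ⟪u k, φ j⟫ ^ 2)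
        = ∑ j ∈ Finset.range d, (lam j - μ)
          - ∑ j ∈ Finset.range d, (lam j - μ) * ∑ k : Fin d, ⟪u k, φ j⟫ ^ 2 := by
          rw [← Finset.sum_sub_distrib]
          exact Finset.sum_congr rfl fun j _ => by ring
      _ = ∑ j : Fin d, (lam (j : ℕ) - μ)
          - ∑ j : Fin d, ∑ k ∈ Finset.range d, (lam k - μ) * ⟪u j, φ k⟫ ^ 2 := by
          rw [Fin.sum_univ_eq_sum_range (fun j => lam j - μ)]
          congr 1
          rw [Finset.sum_comm]
          exact Finset.sum_congr rfl fun k _ => by rw [Finset.mul_sum]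
      _ = ∑ j : Fin d,
            (lam (j : ℕ) - (μ + ∑ k ∈ Finset.range d, (lam k - μ) * ⟪u j, φ k⟫ ^ 2)) := by
          rw [← Finset.sum_sub_distrib]
          exact Finset.sum_congr rfl fun j _ => by ring
  · apply Finset.sum_nonneg
    intro j hj
    have hj' := Finset.mem_range.mp hj
    exact mul_nonneg (by linarith [hle j hj']) (by linarith [bessel j])
end
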